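/- arXiv:2101.00312 — 5 statements merged into one kernel-verified Lean document; each statement's English description precedes it below -/
import Mathlib

section
/- Let T and S be bounded linear operators on H admitting reduced A-adjoints T^♯ and S^♯. Then, for both choices of sign, ‖T ± S‖_A ≤ √(‖T^♯T + S^♯S‖_A + ‖T^♯S + S^♯T‖_A) ≤ ‖T‖_A + ‖S‖_A. -/
open ContinuousLinearMap

set_option maxHeartbeats 1000000
set_option synthInstance.maxHeartbeats 1000000

variable {H : Type*} [NormedAddCommGroup H] [InnerProductSpace ℂ H] [CompleteSpace H]

/-- The seminorm on `H` induced by a positive operator `A`: `‖x‖_A = √⟨Ax,x⟩`. -/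
noncomputable def vnA (A : H →L[ℂ] H) (x : H) : ℝ :=
  Real.sqrt (RCLike.re (inner ℂ (A x) x : ℂ))

/-- The `A`-seminorm of an operator: `‖X‖_A = sup {‖Xx‖_A : ‖x‖_A = 1}`. -/
noncomputable def opnA (A : H →L[ℂ] H) (X : H →L[ℂ] H) : ℝ :=
  sSup ((fun x => vnA A (X x)) '' {x : H | vnA A x = 1})

/-- The `A`-numerical radius: `ω_A(X) = sup {|⟨Xx,x⟩_A| : ‖x‖_A = 1}`. -/
noncomputable def wA (A : H →L[ℂ] H) (X : H →L[ℂ] H) : ℝ :=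
  sSup ((fun x => ‖(inner ℂ (A (X x)) x : ℂ)‖) '' {x : H | vnA A x = 1})

/-- `S` is the reduced `A`-adjoint of `T`: `A ∘ S = T* ∘ A` and
`range S ⊆ closure (range A)`. -/
def IsReducedAdjA (A T S : H →L[ℂ] H) : Prop :=
  A ∘L S = (ContinuousLinearMap.adjoint T) ∘L A ∧
    Set.range S ⊆ closure (Set.range (A : H → H))

/-- `X` is `A`-selfadjoint: `A ∘ X = X* ∘ A`. -/
def IsSelfAdjA (A X : H →L[ℂ] H) : Prop :=
  A ∘L X = (ContinuousLinearMap.adjoint X) ∘L A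

/-- `Re_A(T) = (T + T♯)/2`. -/
noncomputable def ReA (T Ts : H →L[ℂ] H) : H →L[ℂ] H := (2 : ℂ)⁻¹ • (T + Ts)

/-- `Im_A(T) = (T - T♯)/(2i)`. -/
noncomputable def ImA (T Ts : H →L[ℂ] H) : H →L[ℂ] H := (2 * Complex.I)⁻¹ • (T - Ts)

section basics
variable {A B : H →L[ℂ] H} (hB : B * B = A) (hBsa : IsSelfAdjoint B)

include hBsa in
lemma Bsymm (u v : H) : (inner ℂ (B u) v : ℂ) = inner ℂ u (B v) :=
  (isSelfAdjoint_iff_isSymmetric.mp hBsa) u v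

include hB hBsa in
lemma innA (x y : H) : (inner ℂ (A x) y : ℂ) = inner ℂ (B x) (B y) := by
  have : A x = B (B x) := by rw [← hB]; rfl
  rw [this, Bsymm hBsa]

include hB hBsa in
lemma vn_eq (x : H) : vnA A x = ‖B x‖ := by
  rw [vnA, innA hB hBsa, inner_self_eq_norm_sq (𝕜 := ℂ), Real.sqrt_sq (norm_nonneg _)]

omit [CompleteSpace H] in
lemma vn_nonneg (x : H) : 0 ≤ vnA A x := Real.sqrt_nonneg _

include hB hBsa in
lemma innA_abs_le (x y : H) : ‖(inner ℂ (A x) y : ℂ)‖ ≤ vnA A x * vnA A y := by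
  rw [innA hB hBsa, vn_eq hB hBsa, vn_eq hB hBsa]
  exact norm_inner_le_norm _ _

include hB hBsa in
lemma vn_smul (z : ℂ) (x : H) : vnA A (z • x) = ‖z‖ * vnA A x := by
  rw [vn_eq hB hBsa, vn_eq hB hBsa, map_smul, norm_smul]

include hB hBsa in
lemma vn_sq (x : H) : vnA A x ^ 2 = RCLike.re (inner ℂ (A x) x : ℂ) := by
  rw [vnA, Real.sq_sqrt]
  rw [innA hB hBsa, inner_self_eq_norm_sq (𝕜 := ℂ)]
  positivity

end basics

section bound
variable {A B : H →L[ℂ] H} (hB : B * B = A) (hBsa : IsSelfAdjoint B)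

lemma move {T Ts : H →L[ℂ] H} (hrel : A ∘L Ts = adjoint T ∘L A) (w z : H) :
    (inner ℂ (A (Ts w)) z : ℂ) = inner ℂ (A w) (T z) := by
  have h1 : A (Ts w) = adjoint T (A w) := by
    have := congrArg (fun (X : H →L[ℂ] H) => X w) hrel
    simpa using this
  rw [h1, adjoint_inner_left]

include hB hBsa in
lemma innA_conj (x y : H) : (inner ℂ (A x) y : ℂ) = starRingEnd ℂ (inner ℂ (A y) x) := by
  rw [innA hB hBsa, innA hB hBsa, inner_conj_symm]

include hB hBsa in
lemma moveR {T Ts : H →L[ℂ] H} (hrel : A ∘L Ts = adjoint T ∘L A) (u v : H) :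
    (inner ℂ (A ((Ts ∘L T) u)) v : ℂ) = inner ℂ (A u) ((Ts ∘L T) v) := by
  have h1 : (inner ℂ (A ((Ts ∘L T) u)) v : ℂ) = inner ℂ (A (T u)) (T v) := move hrel (T u) v
  have h2 : (inner ℂ (A ((Ts ∘L T) v)) u : ℂ) = inner ℂ (A (T v)) (T u) := move hrel (T v) u
  rw [h1, innA_conj hB hBsa u ((Ts ∘L T) v), h2, ← innA_conj hB hBsa]

omit [CompleteSpace H] in
lemma moveRpow {R : H →L[ℂ] H} (hR : ∀ u v : H, (inner ℂ (A (R u)) v : ℂ) = inner ℂ (A u) (R v))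
    (m : ℕ) (u v : H) : (inner ℂ (A ((R ^ m) u)) v : ℂ) = inner ℂ (A u) ((R ^ m) v) := by
  induction m generalizing u v with
  | zero => simp
  | succ n ih =>
    have e1 : (R ^ (n + 1)) u = (R ^ n) (R u) := by rw [pow_succ]; rfl
    have e2 : (R ^ (n + 1)) v = R ((R ^ n) v) := by rw [pow_succ']; rfl
    rw [e1, ih (R u) v, hR, e2]

include hB hBsa in
lemma vn_bound {T Ts : H →L[ℂ] H} (hrel : A ∘L Ts = adjoint T ∘L A) (x : H) :
    vnA A (T x) ≤ Real.sqrt ‖Ts ∘L T‖ * vnA A x := by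
  set R := Ts ∘L T with hRdef
  set K := ‖R‖ with hKdef
  set c := vnA A x with hcdef
  set v := vnA A (T x) with hvdef
  have hv0 : 0 ≤ v := Real.sqrt_nonneg _
  have hc0 : 0 ≤ c := Real.sqrt_nonneg _
  have hK0 : 0 ≤ K := norm_nonneg _
  have hR : ∀ u v : H, (inner ℂ (A (R u)) v : ℂ) = inner ℂ (A u) (R v) := moveR hB hBsa hrel
  have fact1 : v ^ 2 ≤ vnA A (R x) * c := by
    have e : v ^ 2 = RCLike.re (inner ℂ (A (R x)) x : ℂ) := by
      rw [hvdef, vn_sq hB hBsa]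
      congr 1
      exact (move hrel (T x) x).symm
    calc v ^ 2 = RCLike.re (inner ℂ (A (R x)) x : ℂ) := e
      _ ≤ ‖(inner ℂ (A (R x)) x : ℂ)‖ := RCLike.re_le_norm _
      _ ≤ vnA A (R x) * c := innA_abs_le hB hBsa _ _
  have fact2 : ∀ m : ℕ, vnA A ((R ^ m) x) ^ 2 ≤ c * vnA A ((R ^ (2 * m)) x) := by
    intro m
    have e : vnA A ((R ^ m) x) ^ 2 = RCLike.re (inner ℂ (A x) ((R ^ (2 * m)) x) : ℂ) := by
      rw [vn_sq hB hBsa, moveRpow hR m x ((R ^ m) x)]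
      congr 2
      show (R ^ m) ((R ^ m) x) = (R ^ (2 * m)) x
      rw [two_mul, pow_add]
      rfl
    calc vnA A ((R ^ m) x) ^ 2 = RCLike.re (inner ℂ (A x) ((R ^ (2 * m)) x) : ℂ) := e
      _ ≤ ‖(inner ℂ (A x) ((R ^ (2 * m)) x) : ℂ)‖ := RCLike.re_le_norm _
      _ ≤ c * vnA A ((R ^ (2 * m)) x) := innA_abs_le hB hBsa _ _
  set M := ‖B‖ * ‖x‖ with hMdef
  have hM0 : 0 ≤ M := mul_nonneg (norm_nonneg _) (norm_nonneg _)
  have fact3 : ∀ m : ℕ, 0 < m → vnA A ((R ^ m) x) ≤ M * K ^ m := by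
    intro m hm
    rw [vn_eq hB hBsa]
    calc ‖B ((R ^ m) x)‖ ≤ ‖B‖ * ‖(R ^ m) x‖ := le_opNorm _ _
      _ ≤ ‖B‖ * (‖R ^ m‖ * ‖x‖) :=
          mul_le_mul_of_nonneg_left (le_opNorm _ _) (norm_nonneg _)
      _ ≤ ‖B‖ * (K ^ m * ‖x‖) := by
          have := norm_pow_le' R hm
          gcongr
      _ = M * K ^ m := by ring
  rcases eq_or_lt_of_le hc0 with hc | hc
  · have hz : vnA A (R x) * c = 0 := by rw [← hc, mul_zero]
    have h1 : v ^ 2 ≤ 0 := by rw [hz] at fact1; exact fact1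
    have hv : v = 0 := by nlinarith
    rw [hv, ← hc, mul_zero]
  rcases eq_or_lt_of_le hK0 with hK | hK
  · have h0 : vnA A (R x) ≤ 0 := by
      have h := fact3 1 one_pos
      rw [← hK] at h
      simpa using h
    have h1 : v ^ 2 ≤ 0 := by nlinarith [fact1]
    have hv : v = 0 := by nlinarith
    rw [hv]
    have hs : Real.sqrt K = 0 := by rw [← hK, Real.sqrt_zero]
    rw [hs, zero_mul]
  by_contra hcon
  push_neg at hcon
  have hvpos : 0 < v := lt_of_le_of_lt (by positivity) hcon
  have key : ∀ n : ℕ, v ^ (2 ^ (n + 1)) * c ≤ c ^ (2 ^ (n + 1)) * vnA A ((R ^ (2 ^ n)) x) := by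
    intro n
    induction n with
    | zero =>
      have ha0 : 0 ≤ vnA A (R x) := Real.sqrt_nonneg _
      have h : v ^ 2 * c ≤ c ^ 2 * vnA A (R x) := by nlinarith [fact1]
      simpa [pow_one] using h
    | succ n ih =>
      have ha0 : 0 ≤ vnA A ((R ^ (2 ^ n)) x) := Real.sqrt_nonneg _
      have hb0 : 0 ≤ vnA A ((R ^ (2 ^ (n + 1))) x) := Real.sqrt_nonneg _
      have sq_ih : (v ^ (2 ^ (n + 1)) * c) ^ 2 ≤ (c ^ (2 ^ (n + 1)) * vnA A ((R ^ (2 ^ n)) x)) ^ 2 := by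
        have h1 : 0 ≤ v ^ (2 ^ (n + 1)) * c := by positivity
        nlinarith [ih]
      have f2 := fact2 (2 ^ n)
      have e2 : 2 * 2 ^ n = 2 ^ (n + 1) := by ring
      rw [e2] at f2
      have expand : (v ^ (2 ^ (n + 1))) ^ 2 = v ^ (2 ^ (n + 1 + 1)) := by
        rw [← pow_mul, ← pow_succ]
      have expandc : (c ^ (2 ^ (n + 1))) ^ 2 = c ^ (2 ^ (n + 1 + 1)) := by
        rw [← pow_mul, ← pow_succ]
      have step : v ^ (2 ^ (n + 1 + 1)) * c ^ 2 ≤ c ^ (2 ^ (n + 1 + 1)) * (c * vnA A ((R ^ (2 ^ (n + 1))) x)) := by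
        calc v ^ (2 ^ (n + 1 + 1)) * c ^ 2 = (v ^ (2 ^ (n + 1)) * c) ^ 2 := by
              rw [mul_pow, expand]
          _ ≤ (c ^ (2 ^ (n + 1)) * vnA A ((R ^ (2 ^ n)) x)) ^ 2 := sq_ih
          _ = c ^ (2 ^ (n + 1 + 1)) * vnA A ((R ^ (2 ^ n)) x) ^ 2 := by
              rw [mul_pow, expandc]
          _ ≤ c ^ (2 ^ (n + 1 + 1)) * (c * vnA A ((R ^ (2 ^ (n + 1))) x)) := by
              have hnn : (0:ℝ) ≤ c ^ (2 ^ (n + 1 + 1)) := by positivity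
              exact mul_le_mul_of_nonneg_left f2 hnn
      have hdiv : (v ^ (2 ^ (n + 1 + 1)) * c) * c ≤ (c ^ (2 ^ (n + 1 + 1)) * vnA A ((R ^ (2 ^ (n + 1))) x)) * c := by
        nlinarith [step]
      exact le_of_mul_le_mul_right hdiv hc
  have key2 : ∀ n : ℕ, (v ^ 2) ^ (2 ^ n) * c ≤ ((c ^ 2 * K) ^ (2 ^ n)) * M := by
    intro n
    have h := key n
    have h3 := fact3 (2 ^ n) (by positivity)
    have e1 : v ^ (2 ^ (n + 1)) = (v ^ 2) ^ (2 ^ n) := by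
      rw [← pow_mul]; congr 1; ring
    have e2 : c ^ (2 ^ (n + 1)) = (c ^ 2) ^ (2 ^ n) := by
      rw [← pow_mul]; congr 1; ring
    calc (v ^ 2) ^ (2 ^ n) * c = v ^ (2 ^ (n + 1)) * c := by rw [e1]
      _ ≤ c ^ (2 ^ (n + 1)) * vnA A ((R ^ (2 ^ n)) x) := h
      _ ≤ c ^ (2 ^ (n + 1)) * (M * K ^ (2 ^ n)) := by
          have hnn : (0:ℝ) ≤ c ^ (2 ^ (n + 1)) := by positivity
          exact mul_le_mul_of_nonneg_left h3 hnn
      _ = ((c ^ 2 * K) ^ (2 ^ n)) * M := by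
          rw [e2, mul_pow]; ring
  have hskc : 0 ≤ Real.sqrt K * c := by positivity
  have h2 : (Real.sqrt K * c) ^ 2 < v ^ 2 := by
    exact pow_lt_pow_left₀ hcon hskc two_ne_zero
  have h3 : (Real.sqrt K * c) ^ 2 = K * c ^ 2 := by
    rw [mul_pow, Real.sq_sqrt hK0]
  have hv2 : K * c ^ 2 < v ^ 2 := h3 ▸ h2
  have hq : 1 < v ^ 2 / (c ^ 2 * K) := by
    rw [one_lt_div (by positivity)]
    nlinarith
  obtain ⟨n, hn⟩ := pow_unbounded_of_one_lt (M / c) hq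
  set q := v ^ 2 / (c ^ 2 * K) with hqdef
  have hq1 : 1 ≤ q := le_of_lt hq
  have hmono : q ^ n ≤ q ^ (2 ^ n) := pow_le_pow_right₀ hq1 (Nat.le_of_lt (Nat.lt_two_pow_self))
  have hfin : q ^ (2 ^ n) ≤ M / c := by
    have h := key2 n
    have hd : (0:ℝ) < (c ^ 2 * K) ^ (2 ^ n) := by positivity
    rw [hqdef, div_pow, div_le_div_iff₀ hd hc]
    calc (v ^ 2) ^ 2 ^ n * c ≤ ((c ^ 2 * K) ^ (2 ^ n)) * M := h
      _ = M * (c ^ 2 * K) ^ 2 ^ n := by ring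
  exact lt_irrefl _ (lt_of_lt_of_le (lt_of_lt_of_le hn hmono) hfin)

end bound

section opn
variable {A B : H →L[ℂ] H} (hB : B * B = A) (hBsa : IsSelfAdjoint B)

omit [CompleteSpace H] in
lemma opnA_nonneg (X : H →L[ℂ] H) : 0 ≤ opnA A X :=
  Real.sSup_nonneg (by rintro y ⟨x, hx, rfl⟩; exact Real.sqrt_nonneg _)

include hB hBsa in
lemma vn_add_le (u v : H) : vnA A (u + v) ≤ vnA A u + vnA A v := by
  rw [vn_eq hB hBsa, vn_eq hB hBsa, vn_eq hB hBsa, map_add]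
  exact norm_add_le _ _

omit [CompleteSpace H] in
lemma opnA_le {X : H →L[ℂ] H} {m : ℝ} (hm : 0 ≤ m)
    (h : ∀ x, vnA A x = 1 → vnA A (X x) ≤ m) : opnA A X ≤ m :=
  Real.sSup_le (by rintro y ⟨x, hx, rfl⟩; exact h x hx) hm

omit [CompleteSpace H] in
lemma le_opnA {X : H →L[ℂ] H} {C : ℝ} (hC : ∀ x, vnA A (X x) ≤ C * vnA A x)
    {x : H} (hx : vnA A x = 1) : vnA A (X x) ≤ opnA A X := by
  refine le_csSup ⟨C, ?_⟩ ⟨x, hx, rfl⟩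
  rintro y ⟨z, hz, rfl⟩
  have h := hC z
  rw [Set.mem_setOf_eq] at hz
  rw [hz, mul_one] at h
  exact h

include hB hBsa in
lemma vn_smul_real (t : ℝ) (x : H) : vnA A (((t : ℝ) : ℂ) • x) = |t| * vnA A x := by
  rw [vn_eq hB hBsa, vn_eq hB hBsa, map_smul, norm_smul, Complex.norm_real, Real.norm_eq_abs]

include hB hBsa in
lemma vn_le_opnA {X : H →L[ℂ] H} {C : ℝ} (hC : ∀ x, vnA A (X x) ≤ C * vnA A x)
    (x : H) : vnA A (X x) ≤ opnA A X * vnA A x := by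
  have hnn : 0 ≤ vnA A x := Real.sqrt_nonneg _
  rcases hnn.eq_or_lt with h0 | h0
  · have h1 : vnA A (X x) ≤ 0 := by
      have h := hC x
      rw [← h0, mul_zero] at h
      exact h
    have h2 : vnA A (X x) = 0 := le_antisymm h1 (Real.sqrt_nonneg _)
    rw [h2, ← h0, mul_zero]
  · have hu : vnA A ((((vnA A x)⁻¹ : ℝ) : ℂ) • x) = 1 := by
      rw [vn_smul_real hB hBsa, abs_of_pos (inv_pos.mpr h0), inv_mul_cancel₀ (ne_of_gt h0)]
    have h := le_opnA hC hu
    rw [map_smul, vn_smul_real hB hBsa, abs_of_pos (inv_pos.mpr h0)] at h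
    have h3 := mul_le_mul_of_nonneg_left h (le_of_lt h0)
    have h4 : vnA A x * ((vnA A x)⁻¹ * vnA A (X x)) = vnA A (X x) := by
      field_simp
    rw [h4] at h3
    linarith [h3]

include hB hBsa in
lemma vn_parallelogram (x y : H) :
    vnA A (x + y) ^ 2 + vnA A (x - y) ^ 2 = 2 * vnA A x ^ 2 + 2 * vnA A y ^ 2 := by
  rw [vn_eq hB hBsa, vn_eq hB hBsa, vn_eq hB hBsa, vn_eq hB hBsa, map_add, map_sub]
  have h := parallelogram_law_with_norm ℂ (B x) (B y)
  simp only [pow_two]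
  linarith

include hB hBsa in
lemma opnA_le_of_selfadj {X : H →L[ℂ] H} (hX : A ∘L X = adjoint X ∘L A) {m : ℝ} (hm : 0 ≤ m)
    (hw : ∀ z : H, ‖(inner ℂ (A (X z)) z : ℂ)‖ ≤ m * vnA A z ^ 2) : opnA A X ≤ m := by
  refine opnA_le hm ?_
  intro x hx
  have hnn : 0 ≤ vnA A (X x) := Real.sqrt_nonneg _
  rcases hnn.eq_or_lt with h0 | h0
  · rw [← h0]; exact hm
  have main : ∀ y : H, vnA A y = 1 → RCLike.re (inner ℂ (A (X x)) y : ℂ) ≤ m := by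
    intro y hvy
    have hconj : (inner ℂ (A (X y)) x : ℂ) = starRingEnd ℂ (inner ℂ (A (X x)) y) := by
      rw [move hX y x, innA_conj hB hBsa y (X x)]
    have key : (inner ℂ (A (X x)) y : ℂ) + inner ℂ (A (X y)) x
        = 2 * (RCLike.re (inner ℂ (A (X x)) y : ℂ) : ℂ) := by
      rw [hconj]
      exact RCLike.add_conj _
    have expand : (inner ℂ (A (X (x + y))) (x + y) : ℂ) - inner ℂ (A (X (x - y))) (x - y)
        = 2 * ((inner ℂ (A (X x)) y : ℂ) + inner ℂ (A (X y)) x) := by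
      simp only [map_add, map_sub, inner_add_left, inner_add_right, inner_sub_left,
        inner_sub_right]
      ring
    have expand2 : (inner ℂ (A (X (x + y))) (x + y) : ℂ) - inner ℂ (A (X (x - y))) (x - y)
        = ((4 * RCLike.re (inner ℂ (A (X x)) y : ℂ) : ℝ) : ℂ) := by
      rw [expand, key]
      push_cast
      ring
    have hpolar : RCLike.re (inner ℂ (A (X (x + y))) (x + y) : ℂ)
        - RCLike.re (inner ℂ (A (X (x - y))) (x - y) : ℂ)
        = 4 * RCLike.re (inner ℂ (A (X x)) y : ℂ) := by
      have h := congrArg RCLike.re expand2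
      rw [map_sub] at h
      simpa using h
    have hb1 : RCLike.re (inner ℂ (A (X (x + y))) (x + y) : ℂ) ≤ m * vnA A (x + y) ^ 2 :=
      le_trans (RCLike.re_le_norm _) (hw _)
    have hb2 : - RCLike.re (inner ℂ (A (X (x - y))) (x - y) : ℂ) ≤ m * vnA A (x - y) ^ 2 := by
      have h1 := RCLike.abs_re_le_norm (inner ℂ (A (X (x - y))) (x - y) : ℂ)
      have h2 := hw (x - y)
      have h3 := neg_le_abs (RCLike.re (inner ℂ (A (X (x - y))) (x - y) : ℂ))
      linarith
    have hpar := vn_parallelogram hB hBsa x y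
    have hxy : vnA A (x + y) ^ 2 + vnA A (x - y) ^ 2 = 4 := by
      rw [hpar, hx, hvy]; norm_num
    have h5 : m * vnA A (x + y) ^ 2 + m * vnA A (x - y) ^ 2 = 4 * m := by
      rw [← mul_add, hxy]; ring
    linarith [hb1, hb2, hpolar, h5]
  have hvy : vnA A ((((vnA A (X x))⁻¹ : ℝ) : ℂ) • (X x)) = 1 := by
    rw [vn_smul_real hB hBsa, abs_of_pos (inv_pos.mpr h0), inv_mul_cancel₀ (ne_of_gt h0)]
  have hfin := main _ hvy
  have hcomp : RCLike.re (inner ℂ (A (X x)) ((((vnA A (X x))⁻¹ : ℝ) : ℂ) • (X x)) : ℂ)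
      = vnA A (X x) := by
    rw [inner_smul_right, ← Complex.real_smul, RCLike.smul_re, innA hB hBsa,
      inner_self_eq_norm_sq, ← vn_eq hB hBsa]
    rw [sq, ← mul_assoc, inv_mul_cancel₀ (ne_of_gt h0), one_mul]
  rw [hcomp] at hfin
  exact hfin

end opn

theorem stmt5 (A T S Ts Ss : H →L[ℂ] H) (hA : A.IsPositive) (hA0 : A ≠ 0)
    (hTs : IsReducedAdjA A T Ts) (hSs : IsReducedAdjA A S Ss) :
    (opnA A (T + S) ≤ Real.sqrt (opnA A (Ts ∘L T + Ss ∘L S) + opnA A (Ts ∘L S + Ss ∘L T)) ∧ opnA A (T - S) ≤ Real.sqrt (opnA A (Ts ∘L T + Ss ∘L S) + opnA A (Ts ∘L S + Ss ∘L T))) ∧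
    Real.sqrt (opnA A (Ts ∘L T + Ss ∘L S) + opnA A (Ts ∘L S + Ss ∘L T)) ≤ opnA A T + opnA A S := by
  have hA' : (0 : H →L[ℂ] H) ≤ A := (nonneg_iff_isPositive A).2 hA
  have hB : CFC.sqrt A * CFC.sqrt A = A := CFC.sqrt_mul_sqrt_self A hA'
  have hBsa : IsSelfAdjoint (CFC.sqrt A) :=
    ((nonneg_iff_isPositive _).1 (CFC.sqrt_nonneg (a := A))).isSelfAdjoint
  obtain ⟨hrelT, -⟩ := hTs
  obtain ⟨hrelS, -⟩ := hSs
  have hAadj : adjoint A = A := by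
    rw [← star_eq_adjoint]; exact hA.isSelfAdjoint
  have hrevT : A ∘L T = adjoint Ts ∘L A := by
    have h := congrArg (fun X : H →L[ℂ] H => adjoint X) hrelT
    simp only [adjoint_comp, adjoint_adjoint, hAadj] at h
    exact h.symm
  have hrevS : A ∘L S = adjoint Ss ∘L A := by
    have h := congrArg (fun X : H →L[ℂ] H => adjoint X) hrelS
    simp only [adjoint_comp, adjoint_adjoint, hAadj] at h
    exact h.symm
  -- pointwise linear bounds
  have cT : ∀ x, vnA A (T x) ≤ Real.sqrt ‖Ts ∘L T‖ * vnA A x :=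
    fun x => vn_bound hB hBsa hrelT x
  have cS : ∀ x, vnA A (S x) ≤ Real.sqrt ‖Ss ∘L S‖ * vnA A x :=
    fun x => vn_bound hB hBsa hrelS x
  have cTs : ∀ x, vnA A (Ts x) ≤ Real.sqrt ‖T ∘L Ts‖ * vnA A x :=
    fun x => vn_bound hB hBsa hrevT x
  have cSs : ∀ x, vnA A (Ss x) ≤ Real.sqrt ‖S ∘L Ss‖ * vnA A x :=
    fun x => vn_bound hB hBsa hrevS x
  have pT : ∀ x, vnA A (T x) ≤ opnA A T * vnA A x := vn_le_opnA hB hBsa cT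
  have pS : ∀ x, vnA A (S x) ≤ opnA A S * vnA A x := vn_le_opnA hB hBsa cS
  have ha0 : 0 ≤ opnA A T := opnA_nonneg T
  have hb0 : 0 ≤ opnA A S := opnA_nonneg S
  -- bounds for P and Q
  have cP : ∀ x, vnA A ((Ts ∘L T + Ss ∘L S) x) ≤
      (Real.sqrt ‖T ∘L Ts‖ * Real.sqrt ‖Ts ∘L T‖ +
        Real.sqrt ‖S ∘L Ss‖ * Real.sqrt ‖Ss ∘L S‖) * vnA A x := by
    intro x
    have e : (Ts ∘L T + Ss ∘L S) x = Ts (T x) + Ss (S x) := rfl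
    have h1 : vnA A ((Ts ∘L T + Ss ∘L S) x) ≤ vnA A (Ts (T x)) + vnA A (Ss (S x)) := by
      rw [e]; exact vn_add_le hB hBsa _ _
    have h2 : vnA A (Ts (T x)) ≤ Real.sqrt ‖T ∘L Ts‖ * (Real.sqrt ‖Ts ∘L T‖ * vnA A x) :=
      le_trans (cTs (T x)) (mul_le_mul_of_nonneg_left (cT x) (Real.sqrt_nonneg _))
    have h3 : vnA A (Ss (S x)) ≤ Real.sqrt ‖S ∘L Ss‖ * (Real.sqrt ‖Ss ∘L S‖ * vnA A x) :=
      le_trans (cSs (S x)) (mul_le_mul_of_nonneg_left (cS x) (Real.sqrt_nonneg _))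
    nlinarith [h1, h2, h3]
  have cQ : ∀ x, vnA A ((Ts ∘L S + Ss ∘L T) x) ≤
      (Real.sqrt ‖T ∘L Ts‖ * Real.sqrt ‖Ss ∘L S‖ +
        Real.sqrt ‖S ∘L Ss‖ * Real.sqrt ‖Ts ∘L T‖) * vnA A x := by
    intro x
    have e : (Ts ∘L S + Ss ∘L T) x = Ts (S x) + Ss (T x) := rfl
    have h1 : vnA A ((Ts ∘L S + Ss ∘L T) x) ≤ vnA A (Ts (S x)) + vnA A (Ss (T x)) := by
      rw [e]; exact vn_add_le hB hBsa _ _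
    have h2 : vnA A (Ts (S x)) ≤ Real.sqrt ‖T ∘L Ts‖ * (Real.sqrt ‖Ss ∘L S‖ * vnA A x) :=
      le_trans (cTs (S x)) (mul_le_mul_of_nonneg_left (cS x) (Real.sqrt_nonneg _))
    have h3 : vnA A (Ss (T x)) ≤ Real.sqrt ‖S ∘L Ss‖ * (Real.sqrt ‖Ts ∘L T‖ * vnA A x) :=
      le_trans (cSs (T x)) (mul_le_mul_of_nonneg_left (cT x) (Real.sqrt_nonneg _))
    nlinarith [h1, h2, h3]
  -- pointwise identities used for A-selfadjointness
  have happT : ∀ y, A (Ts y) = adjoint T (A y) := fun y => by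
    have h := congrArg (fun X : H →L[ℂ] H => X y) hrelT
    simpa using h
  have happS : ∀ y, A (Ss y) = adjoint S (A y) := fun y => by
    have h := congrArg (fun X : H →L[ℂ] H => X y) hrelS
    simpa using h
  have happT2 : ∀ y, adjoint Ts (A y) = A (T y) := fun y => by
    have h := congrArg (fun X : H →L[ℂ] H => X y) hrevT
    simpa using h.symm
  have happS2 : ∀ y, adjoint Ss (A y) = A (S y) := fun y => by
    have h := congrArg (fun X : H →L[ℂ] H => X y) hrevS
    simpa using h.symm
  have hPsa : A ∘L (Ts ∘L T + Ss ∘L S) = adjoint (Ts ∘L T + Ss ∘L S) ∘L A := by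
    have hadj : adjoint (Ts ∘L T + Ss ∘L S)
        = adjoint T ∘L adjoint Ts + adjoint S ∘L adjoint Ss := by
      rw [map_add, adjoint_comp, adjoint_comp]
    ext x
    simp only [comp_apply, add_apply, map_add, hadj]
    rw [happT (T x), happS (S x), happT2 x, happS2 x]
  have hQsa : A ∘L (Ts ∘L S + Ss ∘L T) = adjoint (Ts ∘L S + Ss ∘L T) ∘L A := by
    have hadj : adjoint (Ts ∘L S + Ss ∘L T)
        = adjoint S ∘L adjoint Ts + adjoint T ∘L adjoint Ss := by
      rw [map_add, adjoint_comp, adjoint_comp]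
    ext x
    simp only [comp_apply, add_apply, map_add, hadj]
    rw [happT (S x), happS (T x), happT2 x, happS2 x]
    exact add_comm _ _
  -- numerical radius style bounds
  have hwP : ∀ z : H, ‖(inner ℂ (A ((Ts ∘L T + Ss ∘L S) z)) z : ℂ)‖ ≤
      (opnA A T ^ 2 + opnA A S ^ 2) * vnA A z ^ 2 := by
    intro z
    have e1 : (inner ℂ (A ((Ts ∘L T + Ss ∘L S) z)) z : ℂ)
        = inner ℂ (A (T z)) (T z) + inner ℂ (A (S z)) (S z) := by
      have e : (Ts ∘L T + Ss ∘L S) z = Ts (T z) + Ss (S z) := rfl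
      rw [e, map_add, inner_add_left, move hrelT (T z) z, move hrelS (S z) z]
    have q1 := mul_le_mul (pT z) (pT z) (Real.sqrt_nonneg _)
      (mul_nonneg ha0 (Real.sqrt_nonneg _))
    have q2 := mul_le_mul (pS z) (pS z) (Real.sqrt_nonneg _)
      (mul_nonneg hb0 (Real.sqrt_nonneg _))
    calc ‖(inner ℂ (A ((Ts ∘L T + Ss ∘L S) z)) z : ℂ)‖
        ≤ ‖(inner ℂ (A (T z)) (T z) : ℂ)‖ + ‖(inner ℂ (A (S z)) (S z) : ℂ)‖ := by
          rw [e1]; exact norm_add_le _ _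
      _ ≤ vnA A (T z) * vnA A (T z) + vnA A (S z) * vnA A (S z) :=
          add_le_add (innA_abs_le hB hBsa _ _) (innA_abs_le hB hBsa _ _)
      _ ≤ (opnA A T ^ 2 + opnA A S ^ 2) * vnA A z ^ 2 := by nlinarith [q1, q2]
  have hwQ : ∀ z : H, ‖(inner ℂ (A ((Ts ∘L S + Ss ∘L T) z)) z : ℂ)‖ ≤
      (2 * (opnA A T * opnA A S)) * vnA A z ^ 2 := by
    intro z
    have e1 : (inner ℂ (A ((Ts ∘L S + Ss ∘L T) z)) z : ℂ)
        = inner ℂ (A (S z)) (T z) + inner ℂ (A (T z)) (S z) := by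
      have e : (Ts ∘L S + Ss ∘L T) z = Ts (S z) + Ss (T z) := rfl
      rw [e, map_add, inner_add_left, move hrelT (S z) z, move hrelS (T z) z]
    have q1 := mul_le_mul (pS z) (pT z) (Real.sqrt_nonneg _)
      (mul_nonneg hb0 (Real.sqrt_nonneg _))
    have q2 := mul_le_mul (pT z) (pS z) (Real.sqrt_nonneg _)
      (mul_nonneg ha0 (Real.sqrt_nonneg _))
    calc ‖(inner ℂ (A ((Ts ∘L S + Ss ∘L T) z)) z : ℂ)‖
        ≤ ‖(inner ℂ (A (S z)) (T z) : ℂ)‖ + ‖(inner ℂ (A (T z)) (S z) : ℂ)‖ := by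
          rw [e1]; exact norm_add_le _ _
      _ ≤ vnA A (S z) * vnA A (T z) + vnA A (T z) * vnA A (S z) :=
          add_le_add (innA_abs_le hB hBsa _ _) (innA_abs_le hB hBsa _ _)
      _ ≤ (2 * (opnA A T * opnA A S)) * vnA A z ^ 2 := by nlinarith [q1, q2]
  have hP : opnA A (Ts ∘L T + Ss ∘L S) ≤ opnA A T ^ 2 + opnA A S ^ 2 :=
    opnA_le_of_selfadj hB hBsa hPsa (by positivity) hwP
  have hQ : opnA A (Ts ∘L S + Ss ∘L T) ≤ 2 * (opnA A T * opnA A S) :=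
    opnA_le_of_selfadj hB hBsa hQsa
      (mul_nonneg (by norm_num) (mul_nonneg ha0 hb0)) hwQ
  -- first inequalities
  have hplus : opnA A (T + S)
      ≤ Real.sqrt (opnA A (Ts ∘L T + Ss ∘L S) + opnA A (Ts ∘L S + Ss ∘L T)) := by
    refine opnA_le (Real.sqrt_nonneg _) ?_
    intro x hx
    have idp : (inner ℂ (A ((T + S) x)) ((T + S) x) : ℂ)
        = inner ℂ (A ((Ts ∘L T + Ss ∘L S) x)) x + inner ℂ (A ((Ts ∘L S + Ss ∘L T) x)) x := by
      have e0 : (T + S) x = T x + S x := rfl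
      have eP : (Ts ∘L T + Ss ∘L S) x = Ts (T x) + Ss (S x) := rfl
      have eQ : (Ts ∘L S + Ss ∘L T) x = Ts (S x) + Ss (T x) := rfl
      rw [e0, eP, eQ]
      simp only [map_add, inner_add_left, inner_add_right]
      rw [move hrelT (T x) x, move hrelS (S x) x, move hrelT (S x) x, move hrelS (T x) x]
      ring
    have h1 := vn_sq hB hBsa ((T + S) x)
    rw [idp, map_add] at h1
    have h2 : RCLike.re (inner ℂ (A ((Ts ∘L T + Ss ∘L S) x)) x : ℂ)
        ≤ vnA A ((Ts ∘L T + Ss ∘L S) x) * vnA A x :=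
      le_trans (RCLike.re_le_norm _) (innA_abs_le hB hBsa _ _)
    have h3 : RCLike.re (inner ℂ (A ((Ts ∘L S + Ss ∘L T) x)) x : ℂ)
        ≤ vnA A ((Ts ∘L S + Ss ∘L T) x) * vnA A x :=
      le_trans (RCLike.re_le_norm _) (innA_abs_le hB hBsa _ _)
    rw [hx, mul_one] at h2 h3
    have h4 : vnA A ((Ts ∘L T + Ss ∘L S) x) ≤ opnA A (Ts ∘L T + Ss ∘L S) := le_opnA cP hx
    have h5 : vnA A ((Ts ∘L S + Ss ∘L T) x) ≤ opnA A (Ts ∘L S + Ss ∘L T) := le_opnA cQ hx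
    have hsq : vnA A ((T + S) x) ^ 2
        ≤ opnA A (Ts ∘L T + Ss ∘L S) + opnA A (Ts ∘L S + Ss ∘L T) := by linarith
    have h6 := Real.sqrt_le_sqrt hsq
    have h7 : 0 ≤ vnA A ((T + S) x) := Real.sqrt_nonneg _
    rwa [Real.sqrt_sq h7] at h6
  have hminus : opnA A (T - S)
      ≤ Real.sqrt (opnA A (Ts ∘L T + Ss ∘L S) + opnA A (Ts ∘L S + Ss ∘L T)) := by
    refine opnA_le (Real.sqrt_nonneg _) ?_
    intro x hx
    have idm : (inner ℂ (A ((T - S) x)) ((T - S) x) : ℂ)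
        = inner ℂ (A ((Ts ∘L T + Ss ∘L S) x)) x - inner ℂ (A ((Ts ∘L S + Ss ∘L T) x)) x := by
      have e0 : (T - S) x = T x - S x := rfl
      have eP : (Ts ∘L T + Ss ∘L S) x = Ts (T x) + Ss (S x) := rfl
      have eQ : (Ts ∘L S + Ss ∘L T) x = Ts (S x) + Ss (T x) := rfl
      rw [e0, eP, eQ]
      simp only [map_add, map_sub, inner_add_left, inner_add_right, inner_sub_left,
        inner_sub_right]
      rw [move hrelT (T x) x, move hrelS (S x) x, move hrelT (S x) x, move hrelS (T x) x]
      ring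
    have h1 := vn_sq hB hBsa ((T - S) x)
    rw [idm, map_sub] at h1
    have h2 : RCLike.re (inner ℂ (A ((Ts ∘L T + Ss ∘L S) x)) x : ℂ)
        ≤ vnA A ((Ts ∘L T + Ss ∘L S) x) * vnA A x :=
      le_trans (RCLike.re_le_norm _) (innA_abs_le hB hBsa _ _)
    have h3 : - RCLike.re (inner ℂ (A ((Ts ∘L S + Ss ∘L T) x)) x : ℂ)
        ≤ vnA A ((Ts ∘L S + Ss ∘L T) x) * vnA A x := by
      have ha := RCLike.abs_re_le_norm (inner ℂ (A ((Ts ∘L S + Ss ∘L T) x)) x : ℂ)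
      have hbb := innA_abs_le hB hBsa ((Ts ∘L S + Ss ∘L T) x) x
      have hc := neg_le_abs (RCLike.re (inner ℂ (A ((Ts ∘L S + Ss ∘L T) x)) x : ℂ))
      linarith
    rw [hx, mul_one] at h2 h3
    have h4 : vnA A ((Ts ∘L T + Ss ∘L S) x) ≤ opnA A (Ts ∘L T + Ss ∘L S) := le_opnA cP hx
    have h5 : vnA A ((Ts ∘L S + Ss ∘L T) x) ≤ opnA A (Ts ∘L S + Ss ∘L T) := le_opnA cQ hx
    have hsq : vnA A ((T - S) x) ^ 2
        ≤ opnA A (Ts ∘L T + Ss ∘L S) + opnA A (Ts ∘L S + Ss ∘L T) := by linarith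
    have h6 := Real.sqrt_le_sqrt hsq
    have h7 : 0 ≤ vnA A ((T - S) x) := Real.sqrt_nonneg _
    rwa [Real.sqrt_sq h7] at h6
  -- second inequality
  have hsum : opnA A (Ts ∘L T + Ss ∘L S) + opnA A (Ts ∘L S + Ss ∘L T)
      ≤ (opnA A T + opnA A S) ^ 2 := by nlinarith [hP, hQ]
  have hlast : Real.sqrt (opnA A (Ts ∘L T + Ss ∘L S) + opnA A (Ts ∘L S + Ss ∘L T))
      ≤ opnA A T + opnA A S := by
    have h6 := Real.sqrt_le_sqrt hsum
    rwa [Real.sqrt_sq (by positivity)] at h6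
  exact ⟨⟨hplus, hminus⟩, hlast⟩
end

section
/- Let T be a bounded linear operator on H admitting a reduced A-adjoint T^♯. Then (1/4)·‖T^♯T + TT^♯‖_A ≤ (√2/2)·√(ω_A(T)⁴ + ‖Im_A(T)²·Re_A(T)²‖_A) ≤ ω_A(T)². -/
open ContinuousLinearMap

variable {H : Type*} [NormedAddCommGroup H] [InnerProductSpace ℂ H] [CompleteSpace H]

section MainHelpers

set_option linter.unusedSectionVars false

variable {A S X T Ts : H →L[ℂ] H}

namespace AuxA

variable {A S X T Ts : H →L[ℂ] H}

local notation "⟪" x ", " y "⟫" => (inner ℂ x y : ℂ)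

lemma sym (hA : A.IsPositive) (x y : H) : ⟪A x, y⟫ = ⟪x, A y⟫ :=
  (ContinuousLinearMap.isSelfAdjoint_iff_isSymmetric.mp hA.isSelfAdjoint) x y

lemma conj' (hA : A.IsPositive) (x y : H) : ⟪A y, x⟫ = starRingEnd ℂ ⟪A x, y⟫ := by
  rw [sym hA, ← inner_conj_symm]

lemma vnA_nonneg (A : H →L[ℂ] H) (x : H) : 0 ≤ vnA A x := Real.sqrt_nonneg _

lemma vnA_sq (hA : A.IsPositive) (x : H) : vnA A x ^ 2 = RCLike.re ⟪A x, x⟫ :=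
  Real.sq_sqrt (hA.re_inner_nonneg_left x)

noncomputable def core (A : H →L[ℂ] H) (hA : A.IsPositive) : PreInnerProductSpace.Core ℂ H where
  inner x y := ⟪A x, y⟫
  conj_inner_symm x y := by simp [conj' hA x y]
  re_inner_nonneg x := hA.re_inner_nonneg_left x
  add_left x y z := by simp [map_add, inner_add_left]
  smul_left x y r := by simp [map_smul, inner_smul_left, mul_comm]

lemma cs (hA : A.IsPositive) (x y : H) : ‖⟪A x, y⟫‖ ≤ vnA A x * vnA A y := by
  have h : ‖⟪A x, y⟫‖ * ‖⟪A y, x⟫‖ ≤ RCLike.re ⟪A x, x⟫ * RCLike.re ⟪A y, y⟫ :=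
    InnerProductSpace.Core.inner_mul_inner_self_le (𝕜 := ℂ) (c := core A hA) x y
  have h2 : ‖⟪A y, x⟫‖ = ‖⟪A x, y⟫‖ := by rw [conj' hA]; exact RCLike.norm_conj _
  rw [h2, ← vnA_sq hA, ← vnA_sq hA, ← mul_pow] at h
  nlinarith [norm_nonneg (⟪A x, y⟫), mul_nonneg (vnA_nonneg A x) (vnA_nonneg A y)]

lemma vnA_smul (hA : A.IsPositive) (c : ℂ) (x : H) : vnA A (c • x) = ‖c‖ * vnA A x := by
  unfold vnA
  rw [map_smul, inner_smul_left, inner_smul_right, ← mul_assoc, RCLike.conj_mul, ← RCLike.ofReal_pow,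
    RCLike.re_ofReal_mul, Real.sqrt_mul (by positivity), Real.sqrt_sq (norm_nonneg c)]

lemma vnA_le_norm (hA : A.IsPositive) (x : H) : vnA A x ≤ Real.sqrt ‖A‖ * ‖x‖ := by
  have h1 : RCLike.re ⟪A x, x⟫ ≤ ‖A‖ * ‖x‖ ^ 2 := by
    calc RCLike.re ⟪A x, x⟫ ≤ ‖⟪A x, x⟫‖ := RCLike.re_le_norm _
      _ ≤ ‖A x‖ * ‖x‖ := norm_inner_le_norm _ _
      _ ≤ (‖A‖ * ‖x‖) * ‖x‖ := by gcongr; exact A.le_opNorm x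
      _ = ‖A‖ * ‖x‖ ^ 2 := by ring
  calc vnA A x ≤ Real.sqrt (‖A‖ * ‖x‖ ^ 2) := Real.sqrt_le_sqrt h1
    _ = Real.sqrt ‖A‖ * ‖x‖ := by
        rw [Real.sqrt_mul (norm_nonneg A), Real.sqrt_sq (norm_nonneg x)]

lemma sa_inner (h : A * S = star S * A) (x y : H) : ⟪A (S x), y⟫ = ⟪A x, S y⟫ := by
  have h1 : A (S x) = (star S) (A x) := by
    have := congrArg (fun B : H →L[ℂ] H => B x) h
    simpa [ContinuousLinearMap.mul_apply] using this
  rw [h1, star_eq_adjoint, ContinuousLinearMap.adjoint_inner_left]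

lemma sa_pow (h : A * S = star S * A) (n : ℕ) : A * S ^ n = star (S ^ n) * A := by
  induction n with
  | zero => simp
  | succ k ih =>
    calc A * S ^ (k+1) = (A * S ^ k) * S := by rw [pow_succ, mul_assoc]
      _ = star (S ^ k) * (A * S) := by rw [ih, mul_assoc]
      _ = star (S ^ k) * (star S * A) := by rw [h]
      _ = star (S ^ (k+1)) * A := by rw [pow_succ', star_mul, mul_assoc]



lemma key_sq (hA : A.IsPositive) (h : A * S = star S * A) (z : H) :
    vnA A (S z) ^ 2 ≤ vnA A ((S * S) z) * vnA A z := by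
  have h1 : vnA A (S z) ^ 2 = RCLike.re ⟪A (S z), S z⟫ := vnA_sq hA _
  have h2 : ⟪A (S z), S z⟫ = ⟪A z, S (S z)⟫ := by
    rw [sa_inner h]
  calc vnA A (S z) ^ 2 ≤ ‖⟪A z, S (S z)⟫‖ := by
        rw [h1, h2]; exact RCLike.re_le_norm _
    _ ≤ vnA A z * vnA A (S (S z)) := cs hA _ _
    _ = vnA A ((S * S) z) * vnA A z := by
        rw [ContinuousLinearMap.mul_apply]; ring

lemma sa_apply_bound (hA : A.IsPositive) (h : A * S = star S * A) (x : H) :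
    vnA A (S x) ≤ ‖S‖ * vnA A x := by
  have claim : ∀ k : ℕ, vnA A (S x) ^ (2 ^ k) ≤
      vnA A ((S ^ (2 ^ k)) x) * vnA A x ^ (2 ^ k - 1) := by
    intro k
    induction k with
    | zero => simp
    | succ k ih =>
      have h1 : (1:ℕ) ≤ 2 ^ k := Nat.one_le_two_pow
      have e1 : (2:ℕ) ^ (k + 1) = 2 ^ k * 2 := by rw [pow_succ]
      have key := key_sq hA (sa_pow h (2 ^ k)) x
      have hSS : S ^ (2 ^ k) * S ^ (2 ^ k) = S ^ (2 ^ (k + 1)) := by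
        rw [← pow_add]; congr 1; omega
      calc vnA A (S x) ^ 2 ^ (k + 1) = (vnA A (S x) ^ 2 ^ k) ^ 2 := by
            rw [← pow_mul, e1]
        _ ≤ (vnA A ((S ^ (2 ^ k)) x) * vnA A x ^ (2 ^ k - 1)) ^ 2 := by
            apply pow_le_pow_left₀ (pow_nonneg (vnA_nonneg A _) _) ih
        _ = (vnA A ((S ^ (2 ^ k)) x) ^ 2) * (vnA A x ^ (2 ^ k - 1)) ^ 2 := by ring
        _ ≤ (vnA A ((S ^ (2 ^ k) * S ^ (2 ^ k)) x) * vnA A x) * (vnA A x ^ (2 ^ k - 1)) ^ 2 := by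
            apply mul_le_mul_of_nonneg_right key (by positivity)
        _ = vnA A ((S ^ (2 ^ (k + 1))) x) * vnA A x ^ (2 ^ (k + 1) - 1) := by
            rw [hSS, ← pow_mul, mul_assoc, ← pow_succ']
            congr 2
            generalize hm : (2:ℕ) ^ k = m at h1 ⊢
            have : (2:ℕ) ^ (k+1) = m * 2 := by rw [pow_succ, hm]
            omega
  by_cases hb : vnA A x = 0
  · have h2 := claim 1
    simp only [hb, pow_one] at h2
    norm_num at h2
    have h3 : vnA A (S x) = 0 := by nlinarith [vnA_nonneg A (S x)]
    rw [h3, hb, mul_zero]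
  · have hbpos : 0 < vnA A x := (vnA_nonneg A x).lt_of_ne (Ne.symm hb)
    by_contra hlt
    push_neg at hlt
    have ha : 0 < vnA A (S x) := lt_of_le_of_lt (by positivity) hlt
    have hM : 0 < ‖S‖ := by
      rcases ((norm_nonneg S).eq_or_lt.imp Eq.symm id) with h0 | h0
      · exfalso
        have : S = 0 := norm_eq_zero.mp h0
        rw [this] at ha
        simp [vnA] at ha
      · exact h0
    set q : ℝ := vnA A (S x) / (‖S‖ * vnA A x) with hq
    have hq1 : 1 < q := (one_lt_div (by positivity)).mpr hlt
    have bound : ∀ k : ℕ, q ^ (2 ^ k) ≤ (Real.sqrt ‖A‖ * ‖x‖) / vnA A x := by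
      intro k
      have h1 := claim k
      have h2 : vnA A ((S ^ (2 ^ k)) x) ≤ Real.sqrt ‖A‖ * (‖S‖ ^ (2 ^ k) * ‖x‖) := by
        calc vnA A ((S ^ (2 ^ k)) x) ≤ Real.sqrt ‖A‖ * ‖(S ^ (2 ^ k)) x‖ := vnA_le_norm hA _
          _ ≤ Real.sqrt ‖A‖ * (‖S ^ (2 ^ k)‖ * ‖x‖) :=
              mul_le_mul_of_nonneg_left ((S ^ (2 ^ k)).le_opNorm x) (Real.sqrt_nonneg _)
          _ ≤ Real.sqrt ‖A‖ * (‖S‖ ^ (2 ^ k) * ‖x‖) :=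
              mul_le_mul_of_nonneg_left
                (mul_le_mul_of_nonneg_right (norm_pow_le' S (by positivity)) (norm_nonneg x))
                (Real.sqrt_nonneg _)
      have hone : (1:ℕ) ≤ 2 ^ k := Nat.one_le_two_pow
      have hsplit : vnA A x ^ (2 ^ k) = vnA A x ^ (2 ^ k - 1) * vnA A x := by
        rw [← pow_succ]; congr 1; omega
      rw [hq, div_pow, div_le_div_iff₀ (by positivity) hbpos]
      calc vnA A (S x) ^ 2 ^ k * vnA A x
          ≤ (Real.sqrt ‖A‖ * (‖S‖ ^ (2 ^ k) * ‖x‖) * vnA A x ^ (2 ^ k - 1)) * vnA A x := by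
            apply mul_le_mul_of_nonneg_right _ hbpos.le
            exact le_trans h1 (mul_le_mul_of_nonneg_right h2 (by positivity))
        _ = Real.sqrt ‖A‖ * ‖x‖ * (‖S‖ * vnA A x) ^ 2 ^ k := by
            rw [mul_pow, hsplit]; ring
    obtain ⟨n, hn⟩ := pow_unbounded_of_one_lt ((Real.sqrt ‖A‖ * ‖x‖) / vnA A x) hq1
    have hmono : q ^ n ≤ q ^ (2 ^ n) :=
      pow_le_pow_right₀ hq1.le (Nat.le_of_lt (Nat.lt_two_pow_self (n := n)))
    linarith [bound n]


lemma wA_nonneg (A X : H →L[ℂ] H) : 0 ≤ wA A X :=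
  Real.sSup_nonneg fun y hy => by obtain ⟨x, -, rfl⟩ := hy; exact norm_nonneg _

lemma opnA_nonneg (A X : H →L[ℂ] H) : 0 ≤ opnA A X :=
  Real.sSup_nonneg fun y hy => by obtain ⟨x, -, rfl⟩ := hy; exact vnA_nonneg _ _

lemma wA_bdd (hA : A.IsPositive) (h : A * S = star S * A) :
    BddAbove ((fun x => ‖(inner ℂ (A (S x)) x : ℂ)‖) '' {x : H | vnA A x = 1}) := by
  refine ⟨‖S‖, ?_⟩
  rintro y ⟨x, hx, rfl⟩
  simp only [Set.mem_setOf_eq] at hx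
  calc ‖⟪A (S x), x⟫‖ ≤ vnA A (S x) * vnA A x := cs hA _ _
    _ ≤ (‖S‖ * vnA A x) * vnA A x := mul_le_mul_of_nonneg_right (sa_apply_bound hA h x) (vnA_nonneg _ _)
    _ = ‖S‖ := by rw [hx]; ring

lemma wA_ub (hA : A.IsPositive) (h : A * S = star S * A) (z : H) :
    ‖⟪A (S z), z⟫‖ ≤ wA A S * vnA A z ^ 2 := by
  by_cases hz : vnA A z = 0
  · rw [hz]
    calc ‖⟪A (S z), z⟫‖ ≤ vnA A (S z) * vnA A z := cs hA _ _
      _ = 0 := by rw [hz, mul_zero]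
      _ ≤ wA A S * 0 ^ 2 := by simp
  · have hzpos : 0 < vnA A z := (vnA_nonneg A z).lt_of_ne (Ne.symm hz)
    set c : ℂ := (((vnA A z)⁻¹ : ℝ) : ℂ) with hc
    have hnc : ‖c‖ = (vnA A z)⁻¹ := by
      rw [hc, Complex.norm_real, Real.norm_eq_abs, abs_of_nonneg (by positivity)]
    have hu : vnA A (c • z) = 1 := by
      rw [vnA_smul hA, hnc, inv_mul_cancel₀ hz]
    have hmem : ‖⟪A (S (c • z)), c • z⟫‖ ∈
        ((fun x => ‖(inner ℂ (A (S x)) x : ℂ)‖) '' {x : H | vnA A x = 1}) :=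
      ⟨c • z, hu, rfl⟩
    have hle := le_csSup (wA_bdd hA h) hmem
    have hval : ‖⟪A (S (c • z)), c • z⟫‖ = (vnA A z)⁻¹ ^ 2 * ‖⟪A (S z), z⟫‖ := by
      rw [map_smul, map_smul, inner_smul_left, inner_smul_right]
      rw [norm_mul, norm_mul, RCLike.norm_conj, hnc]
      ring
    rw [hval] at hle
    calc ‖⟪A (S z), z⟫‖ = ((vnA A z)⁻¹ ^ 2 * ‖⟪A (S z), z⟫‖) * vnA A z ^ 2 := by
          field_simp
      _ ≤ wA A S * vnA A z ^ 2 :=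
          mul_le_mul_of_nonneg_right hle (by positivity)

lemma parallel (hA : A.IsPositive) (x y : H) :
    vnA A (x + y) ^ 2 + vnA A (x - y) ^ 2 = 2 * vnA A x ^ 2 + 2 * vnA A y ^ 2 := by
  have hc : ⟪A y, x⟫ = starRingEnd ℂ ⟪A x, y⟫ := conj' hA x y
  rw [vnA_sq hA, vnA_sq hA, vnA_sq hA, vnA_sq hA]
  have e1 : ⟪A (x + y), x + y⟫ = ⟪A x, x⟫ + ⟪A x, y⟫ + ⟪A y, x⟫ + ⟪A y, y⟫ := by
    simp [map_add, inner_add_left, inner_add_right]; ring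
  have e2 : ⟪A (x - y), x - y⟫ = ⟪A x, x⟫ - ⟪A x, y⟫ - ⟪A y, x⟫ + ⟪A y, y⟫ := by
    simp [map_sub, inner_sub_left, inner_sub_right]; ring
  rw [e1, e2, hc]
  simp [map_add, map_sub, RCLike.conj_re]
  ring

lemma re_four (h : A * S = star S * A) (hA : A.IsPositive) (x y : H) :
    4 * RCLike.re ⟪A (S x), y⟫ =
      RCLike.re ⟪A (S (x + y)), x + y⟫ - RCLike.re ⟪A (S (x - y)), x - y⟫ := by
  have hconj : ∀ u v : H, ⟪A (S v), u⟫ = starRingEnd ℂ ⟪A (S u), v⟫ := by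
    intro u v
    rw [conj' hA u (S v), ← sa_inner h]
  have e1 : ⟪A (S (x + y)), x + y⟫ =
      ⟪A (S x), x⟫ + ⟪A (S x), y⟫ + ⟪A (S y), x⟫ + ⟪A (S y), y⟫ := by
    simp [map_add, inner_add_left, inner_add_right]; ring
  have e2 : ⟪A (S (x - y)), x - y⟫ =
      ⟪A (S x), x⟫ - ⟪A (S x), y⟫ - ⟪A (S y), x⟫ + ⟪A (S y), y⟫ := by
    simp [map_sub, inner_sub_left, inner_sub_right]; ring
  rw [e1, e2, hconj x y]
  simp only [map_add, map_sub, RCLike.conj_re]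
  ring

lemma half_bound (hA : A.IsPositive) (h : A * S = star S * A) (x y : H) :
    ‖⟪A (S x), y⟫‖ ≤ wA A S * ((vnA A x) ^ 2 + (vnA A y) ^ 2) / 2 := by
  have main : ∀ u v : H,
      RCLike.re ⟪A (S u), v⟫ ≤ wA A S * ((vnA A u) ^ 2 + (vnA A v) ^ 2) / 2 := by
    intro u v
    have h4 := re_four h hA u v
    have b1 : RCLike.re ⟪A (S (u + v)), u + v⟫ ≤ wA A S * vnA A (u + v) ^ 2 :=
      le_trans (RCLike.re_le_norm _) (wA_ub hA h _)
    have b2 : -(wA A S * vnA A (u - v) ^ 2) ≤ RCLike.re ⟪A (S (u - v)), u - v⟫ :=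
      (abs_le.mp (le_trans (RCLike.abs_re_le_norm _) (wA_ub hA h (u - v)))).1
    have hp := parallel hA u v
    have hp2 : wA A S * (vnA A (u + v) ^ 2 + vnA A (u - v) ^ 2) =
        wA A S * (2 * vnA A u ^ 2 + 2 * vnA A v ^ 2) := by rw [hp]
    nlinarith [wA_nonneg A S, sq_nonneg (vnA A (u+v)), sq_nonneg (vnA A (u-v))]
  rcases eq_or_ne (⟪A (S x), y⟫) 0 with ht | ht
  · rw [ht, norm_zero]
    exact div_nonneg (mul_nonneg (wA_nonneg A S) (by positivity)) (by norm_num)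
  · set t : ℂ := ⟪A (S x), y⟫ with htt
    have htn : (‖t‖ : ℝ) ≠ 0 := norm_ne_zero_iff.mpr ht
    have htc : ((‖t‖ : ℝ) : ℂ) ≠ 0 := by exact_mod_cast htn
    set c : ℂ := t / ((‖t‖ : ℝ) : ℂ) with hc
    have hcn : ‖c‖ = 1 := by
      rw [hc, norm_div, Complex.norm_real, Real.norm_eq_abs, abs_of_nonneg (norm_nonneg t),
        div_self htn]
    have hkey : (starRingEnd ℂ) c * t = ((‖t‖ : ℝ) : ℂ) := by
      rw [hc, map_div₀, Complex.conj_ofReal, div_mul_eq_mul_div, Complex.conj_mul']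
      rw [sq, mul_div_assoc, div_self htc, mul_one]
    have hre : ‖t‖ = RCLike.re ⟪A (S (c • x)), y⟫ := by
      rw [map_smul, map_smul, inner_smul_left, ← htt, hkey]
      simp
    rw [hre]
    calc RCLike.re ⟪A (S (c • x)), y⟫ ≤ wA A S * ((vnA A (c • x)) ^ 2 + (vnA A y) ^ 2) / 2 :=
          main _ _
      _ = wA A S * ((vnA A x) ^ 2 + (vnA A y) ^ 2) / 2 := by
          rw [vnA_smul hA, hcn, one_mul]

lemma polar (hA : A.IsPositive) (h : A * S = star S * A) (x y : H) :
    ‖⟪A (S x), y⟫‖ ≤ wA A S * vnA A x * vnA A y := by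
  by_cases hx : vnA A x = 0
  · calc ‖⟪A (S x), y⟫‖ ≤ vnA A (S x) * vnA A y := cs hA _ _
      _ ≤ (‖S‖ * vnA A x) * vnA A y :=
          mul_le_mul_of_nonneg_right (sa_apply_bound hA h x) (vnA_nonneg _ _)
      _ = 0 := by rw [hx]; ring
      _ ≤ wA A S * vnA A x * vnA A y := by rw [hx]; simp
  by_cases hy : vnA A y = 0
  · calc ‖⟪A (S x), y⟫‖ ≤ vnA A (S x) * vnA A y := cs hA _ _
      _ = 0 := by rw [hy, mul_zero]
      _ ≤ wA A S * vnA A x * vnA A y := by rw [hy]; simp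
  have hxp : 0 < vnA A x := (vnA_nonneg A x).lt_of_ne (Ne.symm hx)
  have hyp : 0 < vnA A y := (vnA_nonneg A y).lt_of_ne (Ne.symm hy)
  set s : ℝ := Real.sqrt (vnA A y / vnA A x) with hs
  have hsp : 0 < s := Real.sqrt_pos.mpr (by positivity)
  have hs2 : s ^ 2 = vnA A y / vnA A x := Real.sq_sqrt (by positivity)
  have ht' : ⟪A (S (((s : ℝ) : ℂ) • x)), ((s⁻¹ : ℝ) : ℂ) • y⟫ = ⟪A (S x), y⟫ := by
    rw [map_smul, map_smul, inner_smul_left, inner_smul_right, Complex.conj_ofReal,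
      ← mul_assoc]
    have : ((s : ℝ) : ℂ) * ((s⁻¹ : ℝ) : ℂ) = 1 := by
      push_cast
      rw [mul_inv_cancel₀ (by exact_mod_cast hsp.ne')]
    rw [this, one_mul]
  have hb := half_bound hA h (((s : ℝ) : ℂ) • x) (((s⁻¹ : ℝ) : ℂ) • y)
  rw [ht', vnA_smul hA, vnA_smul hA] at hb
  have hns : ‖((s : ℝ) : ℂ)‖ = s := by
    rw [Complex.norm_real, Real.norm_eq_abs, abs_of_pos hsp]
  have hns' : ‖((s⁻¹ : ℝ) : ℂ)‖ = s⁻¹ := by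
    rw [Complex.norm_real, Real.norm_eq_abs, abs_of_pos (by positivity)]
  rw [hns, hns'] at hb
  have harith : wA A S * ((s * vnA A x) ^ 2 + (s⁻¹ * vnA A y) ^ 2) / 2 =
      wA A S * vnA A x * vnA A y := by
    have h1 : (s * vnA A x) ^ 2 = vnA A y * vnA A x := by
      rw [mul_pow, hs2]; field_simp
    have h2 : (s⁻¹ * vnA A y) ^ 2 = vnA A x * vnA A y := by
      rw [mul_pow, inv_pow, hs2]
      field_simp
    rw [h1, h2]; ring
  rw [harith] at hb
  exact hb

lemma sa_vn_bound (hA : A.IsPositive) (h : A * S = star S * A) (x : H) :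
    vnA A (S x) ≤ wA A S * vnA A x := by
  by_cases ha : vnA A (S x) = 0
  · rw [ha]; exact mul_nonneg (wA_nonneg A S) (vnA_nonneg A x)
  have hap : 0 < vnA A (S x) := (vnA_nonneg A _).lt_of_ne (Ne.symm ha)
  have h1 : vnA A (S x) ^ 2 ≤ wA A S * vnA A x * vnA A (S x) := by
    calc vnA A (S x) ^ 2 = RCLike.re ⟪A (S x), S x⟫ := vnA_sq hA _
      _ ≤ ‖⟪A (S x), S x⟫‖ := RCLike.re_le_norm _
      _ ≤ wA A S * vnA A x * vnA A (S x) := polar hA h x (S x)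
  rw [sq] at h1
  exact le_of_mul_le_mul_right h1 hap


lemma adj_flip (hA : A.IsPositive) (hm : A * Ts = star T * A) : A * T = star Ts * A := by
  have h2 : star Ts * A = A * T := by
    have := congrArg star hm
    rwa [star_mul, star_mul, star_star, hA.isSelfAdjoint.star_eq] at this
  exact h2.symm

lemma conj_two : (starRingEnd ℂ) (2:ℂ) = 2 := by
  have : ((2:ℝ) : ℂ) = (2:ℂ) := by norm_num
  rw [← this, Complex.conj_ofReal]

lemma conj_two_inv : (starRingEnd ℂ) (2:ℂ)⁻¹ = (2:ℂ)⁻¹ := by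
  rw [map_inv₀, conj_two]

lemma conj_twoI_inv : (starRingEnd ℂ) ((2:ℂ) * Complex.I)⁻¹ = -((2:ℂ) * Complex.I)⁻¹ := by
  rw [map_inv₀, map_mul, Complex.conj_I, conj_two, ← inv_neg]
  ring_nf

lemma re_sa (hA : A.IsPositive) (hm : A * Ts = star T * A) :
    A * ReA T Ts = star (ReA T Ts) * A := by
  have hm' := adj_flip hA hm
  unfold ReA
  rw [star_smul, star_add, mul_smul_comm, smul_mul_assoc, mul_add, add_mul, hm, hm']
  rw [RCLike.star_def, conj_two_inv, add_comm]

lemma im_sa (hA : A.IsPositive) (hm : A * Ts = star T * A) :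
    A * ImA T Ts = star (ImA T Ts) * A := by
  have hm' := adj_flip hA hm
  unfold ImA
  rw [star_smul, star_sub, mul_smul_comm, smul_mul_assoc, mul_sub, sub_mul, hm, hm']
  rw [RCLike.star_def, conj_twoI_inv, neg_smul, ← smul_neg, neg_sub]

lemma ts_inner (hA : A.IsPositive) (hm : A * Ts = star T * A) (x : H) :
    ⟪A (Ts x), x⟫ = starRingEnd ℂ ⟪A (T x), x⟫ := by
  have h1 : A (Ts x) = (star T) (A x) := by
    have := congrArg (fun B : H →L[ℂ] H => B x) hm
    simpa [ContinuousLinearMap.mul_apply] using this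
  rw [h1, star_eq_adjoint, ContinuousLinearMap.adjoint_inner_left]
  rw [conj' hA x (T x), Complex.conj_conj]

lemma reA_apply (T Ts : H →L[ℂ] H) (x : H) : ReA T Ts x = (2:ℂ)⁻¹ • (T x + Ts x) := by
  simp [ReA]

lemma imA_apply (T Ts : H →L[ℂ] H) (x : H) :
    ImA T Ts x = ((2:ℂ) * Complex.I)⁻¹ • (T x - Ts x) := by
  simp [ImA]

lemma re_inner (hA : A.IsPositive) (hm : A * Ts = star T * A) (x : H) :
    ⟪A (ReA T Ts x), x⟫ = (((⟪A (T x), x⟫ : ℂ).re : ℝ) : ℂ) := by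
  rw [reA_apply, map_smul, inner_smul_left, map_add, inner_add_left, ts_inner hA hm,
    Complex.add_conj, conj_two_inv]
  push_cast
  ring

lemma im_inner (hA : A.IsPositive) (hm : A * Ts = star T * A) (x : H) :
    ⟪A (ImA T Ts x), x⟫ = ((-(⟪A (T x), x⟫ : ℂ).im : ℝ) : ℂ) := by
  rw [imA_apply, map_smul, inner_smul_left, map_sub, inner_sub_left, ts_inner hA hm,
    Complex.sub_conj, conj_twoI_inv]
  have hinv : ((2:ℂ) * Complex.I)⁻¹ = 2⁻¹ * (-Complex.I) := by
    rw [mul_inv, Complex.inv_I]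
  rw [hinv]
  push_cast
  linear_combination (((⟪A (T x), x⟫ : ℂ).im : ℂ)) * Complex.I_sq

lemma wT_bdd (hA : A.IsPositive) (hm : A * Ts = star T * A) :
    BddAbove ((fun x => ‖(inner ℂ (A (T x)) x : ℂ)‖) '' {x : H | vnA A x = 1}) := by
  refine ⟨‖ReA T Ts‖ + ‖ImA T Ts‖, ?_⟩
  rintro y ⟨x, hx, rfl⟩
  simp only [Set.mem_setOf_eq] at hx
  set z : ℂ := ⟪A (T x), x⟫ with hz
  have h1 : ‖z‖ ≤ |z.re| + |z.im| := by
    exact Complex.norm_le_abs_re_add_abs_im z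
  have h2 : |z.re| ≤ ‖ReA T Ts‖ := by
    have : |z.re| = ‖⟪A (ReA T Ts x), x⟫‖ := by
      rw [re_inner hA hm, Complex.norm_real, Real.norm_eq_abs]
    rw [this]
    calc ‖⟪A (ReA T Ts x), x⟫‖ ≤ vnA A (ReA T Ts x) * vnA A x := cs hA _ _
      _ ≤ (‖ReA T Ts‖ * vnA A x) * vnA A x :=
          mul_le_mul_of_nonneg_right (sa_apply_bound hA (re_sa hA hm) x) (vnA_nonneg _ _)
      _ = ‖ReA T Ts‖ := by rw [hx]; ring
  have h3 : |z.im| ≤ ‖ImA T Ts‖ := by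
    have : |z.im| = ‖⟪A (ImA T Ts x), x⟫‖ := by
      rw [im_inner hA hm, Complex.norm_real, Real.norm_eq_abs, abs_neg]
    rw [this]
    calc ‖⟪A (ImA T Ts x), x⟫‖ ≤ vnA A (ImA T Ts x) * vnA A x := cs hA _ _
      _ ≤ (‖ImA T Ts‖ * vnA A x) * vnA A x :=
          mul_le_mul_of_nonneg_right (sa_apply_bound hA (im_sa hA hm) x) (vnA_nonneg _ _)
      _ = ‖ImA T Ts‖ := by rw [hx]; ring
  linarith

lemma wRe_le (hA : A.IsPositive) (hm : A * Ts = star T * A) :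
    wA A (ReA T Ts) ≤ wA A T := by
  apply Real.sSup_le _ (wA_nonneg A T)
  rintro y ⟨x, hx, rfl⟩
  simp only
  rw [re_inner hA hm, Complex.norm_real, Real.norm_eq_abs]
  calc |(⟪A (T x), x⟫ : ℂ).re| ≤ ‖(⟪A (T x), x⟫ : ℂ)‖ := Complex.abs_re_le_norm _
    _ ≤ wA A T := le_csSup (wT_bdd hA hm) ⟨x, hx, rfl⟩

lemma wIm_le (hA : A.IsPositive) (hm : A * Ts = star T * A) :
    wA A (ImA T Ts) ≤ wA A T := by
  apply Real.sSup_le _ (wA_nonneg A T)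
  rintro y ⟨x, hx, rfl⟩
  simp only
  rw [im_inner hA hm, Complex.norm_real, Real.norm_eq_abs, abs_neg]
  calc |(⟪A (T x), x⟫ : ℂ).im| ≤ ‖(⟪A (T x), x⟫ : ℂ)‖ := Complex.abs_im_le_norm _
    _ ≤ wA A T := le_csSup (wT_bdd hA hm) ⟨x, hx, rfl⟩

end AuxA

end MainHelpers

local notation "⟪" x ", " y "⟫" => (inner ℂ x y : ℂ)

set_option maxHeartbeats 1000000 in
theorem stmt6 (A T Ts : H →L[ℂ] H) (hA : A.IsPositive) (hA0 : A ≠ 0)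
    (hTs : IsReducedAdjA A T Ts) :
    (1/4) * opnA A (Ts ∘L T + T ∘L Ts) ≤ (Real.sqrt 2 / 2) * Real.sqrt ((wA A T)^4 + opnA A (((ImA T Ts) ^ (2:ℕ)) ∘L ((ReA T Ts) ^ (2:ℕ)))) ∧
    (Real.sqrt 2 / 2) * Real.sqrt ((wA A T)^4 + opnA A (((ImA T Ts) ^ (2:ℕ)) ∘L ((ReA T Ts) ^ (2:ℕ)))) ≤ (wA A T)^2 := by
  have hm : A * Ts = star T * A := by rw [star_eq_adjoint]; exact hTs.1
  have hre := AuxA.re_sa hA hm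
  have him := AuxA.im_sa hA hm
  have hwre : wA A (ReA T Ts) ≤ wA A T := AuxA.wRe_le hA hm
  have hwim : wA A (ImA T Ts) ≤ wA A T := AuxA.wIm_le hA hm
  set Re := ReA T Ts with hRedef
  set Im := ImA T Ts with hImdef
  set w := wA A T with hwdef
  have hw0 : 0 ≤ w := AuxA.wA_nonneg A T
  have hwre0 : 0 ≤ wA A Re := AuxA.wA_nonneg _ _
  have hwim0 : 0 ≤ wA A Im := AuxA.wA_nonneg _ _
  set QPop := (Im ^ (2:ℕ)) ∘L (Re ^ (2:ℕ)) with hQPdef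
  have hQP : ∀ x : H, QPop x = Im (Im (Re (Re x))) := by
    intro x
    simp [hQPdef, pow_two, ContinuousLinearMap.mul_apply]
  have hQPb : ∀ x : H, vnA A (QPop x) ≤ w^4 * vnA A x := by
    intro x
    rw [hQP]
    have n0 := AuxA.vnA_nonneg A x
    have t1 : wA A Re * vnA A x ≤ w * vnA A x :=
      mul_le_mul_of_nonneg_right hwre n0
    have t1' : 0 ≤ w * vnA A x := mul_nonneg hw0 n0
    have t2 : wA A Re * (wA A Re * vnA A x) ≤ w * (w * vnA A x) :=
      le_trans (mul_le_mul_of_nonneg_left t1 hwre0) (mul_le_mul_of_nonneg_right hwre t1')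
    have t2' : 0 ≤ w * (w * vnA A x) := mul_nonneg hw0 t1'
    have t3 : wA A Im * (w * (w * vnA A x)) ≤ w * (w * (w * vnA A x)) :=
      mul_le_mul_of_nonneg_right hwim t2'
    have t3' : 0 ≤ w * (w * (w * vnA A x)) := mul_nonneg hw0 t2'
    have c1 : vnA A (Re (Re x)) ≤ wA A Re * (wA A Re * vnA A x) :=
      le_trans (AuxA.sa_vn_bound hA hre _)
        (mul_le_mul_of_nonneg_left (AuxA.sa_vn_bound hA hre _) hwre0)
    have c2 : vnA A (Im (Im (Re (Re x)))) ≤ wA A Im * (wA A Im * vnA A (Re (Re x))) :=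
      le_trans (AuxA.sa_vn_bound hA him _)
        (mul_le_mul_of_nonneg_left (AuxA.sa_vn_bound hA him _) hwim0)
    calc vnA A (Im (Im (Re (Re x))))
        ≤ wA A Im * (wA A Im * vnA A (Re (Re x))) := c2
      _ ≤ wA A Im * (wA A Im * (w * (w * vnA A x))) := by
          refine mul_le_mul_of_nonneg_left (mul_le_mul_of_nonneg_left ?_ hwim0) hwim0
          exact le_trans c1 t2 |>.trans (le_refl _) |>.trans (le_refl _)
      _ ≤ wA A Im * (w * (w * (w * vnA A x))) := mul_le_mul_of_nonneg_left t3 hwim0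
      _ ≤ w * (w * (w * (w * vnA A x))) := mul_le_mul_of_nonneg_right hwim t3'
      _ = w^4 * vnA A x := by ring
  set r := opnA A QPop with hrdef
  have hr0 : 0 ≤ r := AuxA.opnA_nonneg _ _
  have hr_bdd : BddAbove ((fun x => vnA A (QPop x)) '' {x : H | vnA A x = 1}) := by
    refine ⟨w^4, ?_⟩
    rintro y ⟨x, hx, rfl⟩
    simp only [Set.mem_setOf_eq] at hx
    have := hQPb x
    rw [hx, mul_one] at this
    exact this
  have hr_le : r ≤ w^4 := by
    apply Real.sSup_le _ (by positivity)
    rintro y ⟨x, hx, rfl⟩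
    simp only [Set.mem_setOf_eq] at hx
    have := hQPb x
    rw [hx, mul_one] at this
    exact this
  have hr_ub : ∀ x : H, vnA A x = 1 → vnA A (QPop x) ≤ r := fun x hx =>
    le_csSup hr_bdd ⟨x, hx, rfl⟩
  have goal2 : (Real.sqrt 2 / 2) * Real.sqrt (w^4 + r) ≤ w^2 := by
    have h1 : Real.sqrt (w^4 + r) ≤ Real.sqrt (2 * w^4) := Real.sqrt_le_sqrt (by linarith)
    have h2 : Real.sqrt (2*w^4) = Real.sqrt 2 * w^2 := by
      rw [Real.sqrt_mul (by norm_num), show w^4 = (w^2)^2 by ring, Real.sqrt_sq (sq_nonneg w)]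
    have h3 : Real.sqrt 2 * Real.sqrt 2 = 2 := Real.mul_self_sqrt (by norm_num)
    calc (Real.sqrt 2 / 2) * Real.sqrt (w^4 + r)
        ≤ (Real.sqrt 2 / 2) * (Real.sqrt 2 * w^2) := by
          apply mul_le_mul_of_nonneg_left _ (by positivity)
          rw [← h2]; exact h1
      _ = w^2 := by linear_combination (w^2/2) * h3
  refine ⟨?_, goal2⟩
  -- Goal 1
  have hII : ((2:ℂ)*Complex.I)⁻¹ * ((2:ℂ)*Complex.I)⁻¹ = -(4:ℂ)⁻¹ := by
    have h4 : ((2:ℂ)*Complex.I)*((2:ℂ)*Complex.I) = -4 := by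
      linear_combination (4:ℂ) * Complex.I_sq
    rw [← mul_inv, h4]
    norm_num
  have hRe2 : ∀ x : H, Re (Re x) =
      (4⁻¹:ℂ) • (T (T x) + T (Ts x) + Ts (T x) + Ts (Ts x)) := by
    intro x
    rw [hRedef]
    simp only [ReA, ContinuousLinearMap.smul_apply, ContinuousLinearMap.add_apply,
      map_smul, map_add]
    module
  have hIm2 : ∀ x : H, Im (Im x) =
      (-(4:ℂ)⁻¹) • (T (T x) - T (Ts x) - Ts (T x) + Ts (Ts x)) := by
    intro x
    rw [hImdef]
    simp only [ImA, ContinuousLinearMap.smul_apply, ContinuousLinearMap.sub_apply,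
      map_smul, map_sub, smul_sub, smul_smul]
    rw [hII]
    module
  have hN : ∀ x : H, (Ts ∘L T + T ∘L Ts) x = (2:ℂ) • (Re (Re x) + Im (Im x)) := by
    intro x
    rw [hRe2, hIm2]
    simp only [ContinuousLinearMap.add_apply, ContinuousLinearMap.comp_apply]
    module
  have elt : ∀ x : H, vnA A x = 1 →
      vnA A ((Ts ∘L T + T ∘L Ts) x) ≤ 2 * Real.sqrt (2*(w^4+r)) := by
    intro x hx
    rw [hN x, AuxA.vnA_smul hA]
    have hn2 : ‖(2:ℂ)‖ = 2 := by norm_num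
    rw [hn2]
    set p := Re (Re x) with hp
    set q := Im (Im x) with hq
    have hpv : vnA A p ≤ w^2 := by
      calc vnA A p ≤ wA A Re * vnA A (Re x) := AuxA.sa_vn_bound hA hre _
        _ ≤ wA A Re * (wA A Re * vnA A x) :=
            mul_le_mul_of_nonneg_left (AuxA.sa_vn_bound hA hre _) hwre0
        _ = wA A Re * wA A Re := by rw [hx, mul_one]
        _ ≤ w * w := mul_le_mul hwre hwre hwre0 hw0
        _ = w^2 := (sq w).symm
    have hqv : vnA A q ≤ w^2 := by
      calc vnA A q ≤ wA A Im * vnA A (Im x) := AuxA.sa_vn_bound hA him _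
        _ ≤ wA A Im * (wA A Im * vnA A x) :=
            mul_le_mul_of_nonneg_left (AuxA.sa_vn_bound hA him _) hwim0
        _ = wA A Im * wA A Im := by rw [hx, mul_one]
        _ ≤ w * w := mul_le_mul hwim hwim hwim0 hw0
        _ = w^2 := (sq w).symm
    have B1 : ‖⟪A p, p⟫‖ ≤ w^4 := by
      calc ‖⟪A p, p⟫‖ ≤ vnA A p * vnA A p := AuxA.cs hA _ _
        _ ≤ w^2 * w^2 := mul_le_mul hpv hpv (AuxA.vnA_nonneg _ _) (by positivity)
        _ = w^4 := by ring
    have B4 : ‖⟪A q, q⟫‖ ≤ w^4 := by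
      calc ‖⟪A q, q⟫‖ ≤ vnA A q * vnA A q := AuxA.cs hA _ _
        _ ≤ w^2 * w^2 := mul_le_mul hqv hqv (AuxA.vnA_nonneg _ _) (by positivity)
        _ = w^4 := by ring
    have B3 : ‖⟪A q, p⟫‖ ≤ r := by
      have e2 : ⟪A q, p⟫ = ⟪A x, Im (Im p)⟫ := by
        rw [hq, AuxA.sa_inner him, AuxA.sa_inner him]
      rw [e2]
      calc ‖⟪A x, Im (Im p)⟫‖ ≤ vnA A x * vnA A (Im (Im p)) := AuxA.cs hA _ _
        _ = vnA A (QPop x) := by rw [hx, one_mul, hp, ← hQP x]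
        _ ≤ r := hr_ub x hx
    have B2 : ‖⟪A p, q⟫‖ ≤ r := by
      have : ⟪A p, q⟫ = starRingEnd ℂ ⟪A q, p⟫ := AuxA.conj' hA q p
      rw [this, RCLike.norm_conj]
      exact B3
    have hsq : vnA A (p + q)^2 ≤ 2*(w^4+r) := by
      rw [AuxA.vnA_sq hA]
      have e : ⟪A (p+q), p+q⟫ = ⟪A p,p⟫+⟪A p,q⟫+⟪A q,p⟫+⟪A q,q⟫ := by
        simp [map_add, inner_add_left, inner_add_right]
        ring
      have n1 := norm_add_le (⟪A p,p⟫+⟪A p,q⟫+⟪A q,p⟫) (⟪A q,q⟫)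
      have n2 := norm_add_le (⟪A p,p⟫+⟪A p,q⟫) (⟪A q,p⟫)
      have n3 := norm_add_le (⟪A p,p⟫) (⟪A p,q⟫)
      have hre2 : RCLike.re ⟪A (p+q), p+q⟫ ≤ ‖⟪A (p+q), p+q⟫‖ := RCLike.re_le_norm _
      rw [e] at hre2
      rw [e]
      linarith
    have hle : vnA A (p+q) ≤ Real.sqrt (2*(w^4+r)) := by
      rw [show vnA A (p+q) = Real.sqrt (vnA A (p+q)^2) from
        (Real.sqrt_sq (AuxA.vnA_nonneg _ _)).symm]
      exact Real.sqrt_le_sqrt hsq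
    linarith
  have hNle : opnA A (Ts ∘L T + T ∘L Ts) ≤ 2 * Real.sqrt (2*(w^4+r)) := by
    apply Real.sSup_le _ (by positivity)
    rintro y ⟨x, hx, rfl⟩
    simp only [Set.mem_setOf_eq] at hx
    exact elt x hx
  have hs : Real.sqrt (2*(w^4+r)) = Real.sqrt 2 * Real.sqrt (w^4+r) :=
    Real.sqrt_mul (by norm_num) _
  rw [hs] at hNle
  linarith
end

section
/- Let T and S be bounded linear operators on H admitting reduced A-adjoints T^♯ and S^♯. Then, for both choices of sign, ‖T ± S‖_A ≤ √(‖TT^♯ + SS^♯‖_A + 2ω_A(TS^♯)) ≤ ‖T‖_A + ‖S‖_A. -/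
open ContinuousLinearMap

variable {H : Type*} [NormedAddCommGroup H] [InnerProductSpace ℂ H] [CompleteSpace H]

set_option linter.unusedSectionVars false

namespace S7

variable {A : H →L[ℂ] H}

lemma q_nonneg (hA : A.IsPositive) (x : H) : 0 ≤ RCLike.re (inner ℂ (A x) x : ℂ) :=
  hA.re_inner_nonneg_left x

lemma vnA_nonneg (A : H →L[ℂ] H) (x : H) : 0 ≤ vnA A x := Real.sqrt_nonneg _

lemma vnA_sq (hA : A.IsPositive) (x : H) :
    vnA A x ^ 2 = RCLike.re (inner ℂ (A x) x : ℂ) := by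
  rw [vnA, Real.sq_sqrt (q_nonneg hA x)]

lemma herm (hA : A.IsPositive) (x y : H) :
    (inner ℂ (A y) x : ℂ) = starRingEnd ℂ (inner ℂ (A x) y : ℂ) := by
  have h := hA.isSelfAdjoint
  rw [isSelfAdjoint_iff'] at h
  calc (inner ℂ (A y) x : ℂ) = inner ℂ y (A x) := by
        conv_lhs => rw [← h, adjoint_inner_left]
    _ = starRingEnd ℂ (inner ℂ (A x) y : ℂ) := by rw [← inner_conj_symm]

lemma re_herm (hA : A.IsPositive) (x y : H) :
    RCLike.re (inner ℂ (A y) x : ℂ) = RCLike.re (inner ℂ (A x) y : ℂ) := by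
  rw [herm hA]; exact RCLike.conj_re _

/-- Cauchy–Schwarz for the positive form. -/
lemma cs (hA : A.IsPositive) (x y : H) :
    ‖(inner ℂ (A x) y : ℂ)‖ ≤ vnA A x * vnA A y := by
  set z : ℂ := inner ℂ (A x) y with hz
  by_cases h0 : z = 0
  · rw [h0, norm_zero]; exact mul_nonneg (vnA_nonneg A x) (vnA_nonneg A y)
  have hnz : (‖z‖ : ℂ) ≠ 0 := by simp [norm_eq_zero, h0]
  have hmc : starRingEnd ℂ z * z = ((‖z‖ : ℝ) : ℂ) ^ 2 := RCLike.conj_mul z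
  have key : ∀ t : ℝ, 0 ≤ RCLike.re (inner ℂ (A x) x : ℂ) * (t * t) + (2 * ‖z‖) * t
      + RCLike.re (inner ℂ (A y) y : ℂ) := by
    intro t
    set s : ℂ := (t : ℂ) * (z / ‖z‖) with hs
    have hq := q_nonneg hA (s • x + y)
    have hyx : (inner ℂ (A y) x : ℂ) = starRingEnd ℂ z := by rw [herm hA, hz]
    have hcs : starRingEnd ℂ s = (t : ℂ) * (starRingEnd ℂ z / ‖z‖) := by
      rw [hs, map_mul, map_div₀]
      simp [Complex.conj_ofReal]
    have hexp : (inner ℂ (A (s • x + y)) (s • x + y) : ℂ)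
        = (starRingEnd ℂ s * s) * inner ℂ (A x) x + (starRingEnd ℂ s * z)
          + (s * starRingEnd ℂ z) + inner ℂ (A y) y := by
      simp only [map_add, map_smul, inner_add_left, inner_add_right, inner_smul_left,
        inner_smul_right, ← hz, hyx]
      ring
    have h1 : starRingEnd ℂ s * s = ((t * t : ℝ) : ℂ) := by
      calc starRingEnd ℂ s * s = ((t:ℂ) * (t:ℂ)) * ((starRingEnd ℂ z * z) / (((‖z‖:ℝ):ℂ))^2) := by
            rw [hcs, hs]; ring
        _ = ((t * t : ℝ) : ℂ) := by
            rw [hmc, div_self (pow_ne_zero 2 hnz), mul_one]; push_cast; ring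
    have h2 : starRingEnd ℂ s * z = ((t * ‖z‖ : ℝ) : ℂ) := by
      calc starRingEnd ℂ s * z = (t:ℂ) * ((starRingEnd ℂ z * z) / ((‖z‖:ℝ):ℂ)) := by
            rw [hcs]; ring
        _ = ((t * ‖z‖ : ℝ) : ℂ) := by
            rw [hmc, pow_two, mul_div_assoc, div_self hnz, mul_one]; push_cast; ring
    have h3 : s * starRingEnd ℂ z = ((t * ‖z‖ : ℝ) : ℂ) := by
      calc s * starRingEnd ℂ z = (t:ℂ) * ((starRingEnd ℂ z * z) / ((‖z‖:ℝ):ℂ)) := by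
            rw [hs]; ring
        _ = ((t * ‖z‖ : ℝ) : ℂ) := by
            rw [hmc, pow_two, mul_div_assoc, div_self hnz, mul_one]; push_cast; ring
    rw [hexp, h1, h2, h3] at hq
    simp only [RCLike.re_to_complex, Complex.add_re, Complex.ofReal_re, Complex.re_ofReal_mul] at hq
    simp only [RCLike.re_to_complex]
    linarith
  have hd := discrim_le_zero key
  rw [discrim] at hd
  have h1 : ‖z‖ ^ 2 ≤ (vnA A x * vnA A y) ^ 2 := by
    have hx := vnA_sq hA x
    have hy := vnA_sq hA y
    nlinarith
  have h2 := Real.sqrt_le_sqrt h1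
  rwa [Real.sqrt_sq (norm_nonneg z),
    Real.sqrt_sq (mul_nonneg (vnA_nonneg A x) (vnA_nonneg A y))] at h2

def AdjPair (A X Y : H →L[ℂ] H) : Prop := A ∘L Y = (ContinuousLinearMap.adjoint X) ∘L A

lemma AdjPair.symm (hA : A.IsPositive) {X Y : H →L[ℂ] H} (h : AdjPair A X Y) :
    AdjPair A Y X := by
  have hsa := hA.isSelfAdjoint
  rw [isSelfAdjoint_iff'] at hsa
  unfold AdjPair at h ⊢
  have := congrArg ContinuousLinearMap.adjoint h
  rw [adjoint_comp, adjoint_comp, adjoint_adjoint, hsa] at this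
  exact this.symm

lemma AdjPair.comp {X Y X' Y' : H →L[ℂ] H} (h : AdjPair A X Y) (h' : AdjPair A X' Y') :
    AdjPair A (X ∘L X') (Y' ∘L Y) := by
  unfold AdjPair at *
  rw [adjoint_comp]
  calc A ∘L (Y' ∘L Y) = (A ∘L Y') ∘L Y := by ext v; simp
    _ = ((adjoint X') ∘L A) ∘L Y := by rw [h']
    _ = (adjoint X') ∘L (A ∘L Y) := by ext v; simp
    _ = (adjoint X') ∘L ((adjoint X) ∘L A) := by rw [h]
    _ = ((adjoint X') ∘L (adjoint X)) ∘L A := by ext v; simp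

lemma AdjPair.add {X Y X' Y' : H →L[ℂ] H} (h : AdjPair A X Y) (h' : AdjPair A X' Y') :
    AdjPair A (X + X') (Y + Y') := by
  unfold AdjPair at *
  rw [map_add]
  ext v
  have h1 := congrFun (congrArg DFunLike.coe h) v
  have h2 := congrFun (congrArg DFunLike.coe h') v
  simp only [comp_apply, coe_comp', Function.comp_apply, add_apply, map_add] at *
  rw [h1, h2]

lemma AdjPair.sub {X Y X' Y' : H →L[ℂ] H} (h : AdjPair A X Y) (h' : AdjPair A X' Y') :
    AdjPair A (X - X') (Y - Y') := by
  unfold AdjPair at *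
  rw [map_sub]
  ext v
  have h1 := congrFun (congrArg DFunLike.coe h) v
  have h2 := congrFun (congrArg DFunLike.coe h') v
  simp only [comp_apply, coe_comp', Function.comp_apply, sub_apply, map_sub] at *
  rw [h1, h2]

lemma AdjPair.pow {M : H →L[ℂ] H} (h : AdjPair A M M) (n : ℕ) :
    AdjPair A (M ^ (n+1)) (M ^ (n+1)) := by
  induction n with
  | zero => simpa [pow_one] using h
  | succ k ih =>
      have := AdjPair.comp h ih
      have hc : M ∘L M ^ (k+1) = M ^ (k+2) := by
        rw [← ContinuousLinearMap.mul_def, ← pow_succ']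
      have hc2 : (M ^ (k+1)) ∘L M = M ^ (k+2) := by
        rw [← ContinuousLinearMap.mul_def, ← pow_succ]
      rwa [hc, hc2] at this

/-- ⟪A (Y x), w⟫ = ⟪A x, X w⟫ -/
lemma AdjPair.inner_eq {X Y : H →L[ℂ] H} (h : AdjPair A X Y) (x w : H) :
    (inner ℂ (A (Y x)) w : ℂ) = inner ℂ (A x) (X w) := by
  have h1 := congrFun (congrArg DFunLike.coe h) x
  simp only [coe_comp', Function.comp_apply] at h1
  rw [h1, adjoint_inner_left]

lemma re_le_norm (z : ℂ) : RCLike.re z ≤ ‖z‖ := by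
  simpa using RCLike.re_le_norm z

/-- key identity: `‖Y x‖_A² = re ⟪A ((X∘Y) x), x⟫`. -/
lemma AdjPair.vnA_sq_eq (hA : A.IsPositive) {X Y : H →L[ℂ] H} (h : AdjPair A X Y) (x : H) :
    vnA A (Y x) ^ 2 = RCLike.re (inner ℂ (A ((X ∘L Y) x)) x : ℂ) := by
  rw [vnA_sq hA, h.inner_eq, ← re_herm hA]
  rfl

lemma AdjPair.vnA_sq_le (hA : A.IsPositive) {X Y : H →L[ℂ] H} (h : AdjPair A X Y) (x : H) :
    vnA A (Y x) ^ 2 ≤ vnA A ((X ∘L Y) x) * vnA A x := by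
  rw [h.vnA_sq_eq hA]
  exact le_trans (re_le_norm _) (cs hA _ _)

lemma vnA_le_norm (hA : A.IsPositive) (y : H) :
    vnA A y ≤ Real.sqrt ‖A‖ * ‖y‖ := by
  have h1 : RCLike.re (inner ℂ (A y) y : ℂ) ≤ ‖A‖ * ‖y‖ ^ 2 := by
    refine le_trans (re_le_norm _) (le_trans (norm_inner_le_norm _ _) ?_)
    have := A.le_opNorm y
    nlinarith [norm_nonneg y, norm_nonneg (A y)]
  calc vnA A y ≤ Real.sqrt (‖A‖ * ‖y‖ ^ 2) := Real.sqrt_le_sqrt h1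
    _ = Real.sqrt ‖A‖ * ‖y‖ := by
        rw [Real.sqrt_mul (norm_nonneg A), Real.sqrt_sq (norm_nonneg y)]

lemma iter (hA : A.IsPositive) {M : H →L[ℂ] H} (hM : AdjPair A M M) (x : H) (n : ℕ) :
    vnA A (M x) ^ (2 ^ n) ≤ vnA A ((M ^ (2 ^ n)) x) * vnA A x ^ (2 ^ n - 1) := by
  induction n with
  | zero => simp [pow_one]
  | succ k ih =>
      have h2k : 1 ≤ 2 ^ k := Nat.one_le_two_pow
      have hMk : AdjPair A (M ^ (2 ^ k)) (M ^ (2 ^ k)) := by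
        have := hM.pow (2 ^ k - 1)
        rwa [Nat.sub_add_cancel h2k] at this
      have step := hMk.vnA_sq_le hA x
      have happ : ((M ^ (2 ^ k)) ∘L (M ^ (2 ^ k))) x = (M ^ (2 ^ (k+1))) x := by
        rw [← ContinuousLinearMap.mul_def, ← pow_add]
        congr 2
        rw [pow_succ]
        omega
      rw [happ] at step
      have e1 : (2:ℕ) ^ (k+1) = 2 ^ k * 2 := by ring
      calc vnA A (M x) ^ 2 ^ (k+1)
          = (vnA A (M x) ^ 2 ^ k) ^ 2 := by rw [e1, pow_mul]
        _ ≤ (vnA A ((M ^ (2 ^ k)) x) * vnA A x ^ (2 ^ k - 1)) ^ 2 := by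
            apply pow_le_pow_left₀ (pow_nonneg (vnA_nonneg A _) _) ih
        _ = vnA A ((M ^ (2 ^ k)) x) ^ 2 * (vnA A x ^ (2 ^ k - 1)) ^ 2 := by ring
        _ ≤ (vnA A ((M ^ (2 ^ (k+1))) x) * vnA A x) * (vnA A x ^ (2 ^ k - 1)) ^ 2 := by
            apply mul_le_mul_of_nonneg_right step (pow_nonneg (pow_nonneg (vnA_nonneg A _) _) _)
        _ = vnA A ((M ^ (2 ^ (k+1))) x) * vnA A x ^ (2 ^ (k+1) - 1) := by
            rw [← pow_mul, mul_assoc, ← pow_succ']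
            congr 2
            omega

lemma pow2_le_aux {a b K : ℝ} (ha : 0 ≤ a) (hb : 0 ≤ b) (hK : 0 ≤ K)
    (h : ∀ n : ℕ, a ^ (2 ^ n) ≤ K * b ^ (2 ^ n)) : a ≤ b := by
  by_contra hab
  push_neg at hab
  rcases eq_or_lt_of_le hb with hb0 | hb0
  · have h0 := h 0
    simp only [pow_one, ← hb0] at h0
    simp at h0
    nlinarith
  · have hr1 : 1 < a / b := (one_lt_div hb0).2 hab
    obtain ⟨m, hm⟩ := pow_unbounded_of_one_lt K hr1
    have hle : (a / b) ^ m ≤ (a / b) ^ (2 ^ m) :=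
      pow_le_pow_right₀ hr1.le (Nat.lt_two_pow_self (n := m)).le
    have hKm : (a / b) ^ (2 ^ m) ≤ K := by
      rw [div_pow, div_le_iff₀ (pow_pos hb0 _)]
      exact h m
    linarith

lemma AdjPair.selfadj_bound (hA : A.IsPositive) {M : H →L[ℂ] H} (hM : AdjPair A M M) (x : H) :
    vnA A (M x) ≤ ‖M‖ * vnA A x := by
  rcases eq_or_lt_of_le (vnA_nonneg A x) with hx0 | hx0
  · have hx : vnA A x = 0 := hx0.symm
    have h1 := iter hA hM x 1
    rw [hx] at h1
    rw [hx]
    norm_num at h1 ⊢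
    nlinarith [vnA_nonneg A (M x)]
  · refine pow2_le_aux (vnA_nonneg A _) (mul_nonneg (norm_nonneg M) (vnA_nonneg A x))
      (div_nonneg (mul_nonneg (Real.sqrt_nonneg ‖A‖) (norm_nonneg x)) hx0.le) (fun n => ?_)
    have h2n : (0:ℕ) < 2 ^ n := Nat.pow_pos (by norm_num)
    have h1 := iter hA hM x n
    have h2 : vnA A ((M ^ (2 ^ n)) x) ≤ Real.sqrt ‖A‖ * (‖M‖ ^ (2 ^ n) * ‖x‖) := by
      refine le_trans (vnA_le_norm hA _) ?_
      have hnp : ‖M ^ (2 ^ n)‖ ≤ ‖M‖ ^ (2 ^ n) := norm_pow_le' M h2n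
      have hstep : ‖(M ^ (2 ^ n)) x‖ ≤ ‖M‖ ^ (2 ^ n) * ‖x‖ :=
        le_trans ((M ^ (2 ^ n)).le_opNorm x)
          (mul_le_mul_of_nonneg_right hnp (norm_nonneg x))
      exact mul_le_mul_of_nonneg_left hstep (Real.sqrt_nonneg _)
    have hxpow : vnA A x ^ (2 ^ n - 1) = vnA A x ^ (2 ^ n) / vnA A x := by
      rw [eq_div_iff hx0.ne', ← pow_succ]
      congr 1
      omega
    calc vnA A (M x) ^ 2 ^ n ≤ vnA A ((M ^ (2 ^ n)) x) * vnA A x ^ (2 ^ n - 1) := h1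
      _ ≤ (Real.sqrt ‖A‖ * (‖M‖ ^ (2 ^ n) * ‖x‖)) * vnA A x ^ (2 ^ n - 1) := by
          apply mul_le_mul_of_nonneg_right h2 (pow_nonneg (vnA_nonneg A _) _)
      _ = Real.sqrt ‖A‖ * ‖x‖ / vnA A x * (‖M‖ * vnA A x) ^ 2 ^ n := by
          rw [hxpow, mul_pow]
          field_simp

lemma AdjPair.bound (hA : A.IsPositive) {X Y : H →L[ℂ] H} (h : AdjPair A X Y) (x : H) :
    vnA A (X x) ≤ Real.sqrt ‖Y ∘L X‖ * vnA A x := by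
  have hsq := (h.symm hA).vnA_sq_le hA x
  have hM : AdjPair A (Y ∘L X) (Y ∘L X) := (h.symm hA).comp h
  have hb := hM.selfadj_bound hA x
  have : vnA A (X x) ^ 2 ≤ ‖Y ∘L X‖ * vnA A x * vnA A x :=
    le_trans hsq (mul_le_mul_of_nonneg_right hb (vnA_nonneg A x))
  have h2 := Real.sqrt_le_sqrt this
  rwa [Real.sqrt_sq (vnA_nonneg A _), show ‖Y ∘L X‖ * vnA A x * vnA A x
      = ‖Y ∘L X‖ * (vnA A x)^2 by ring,
    Real.sqrt_mul (norm_nonneg _), Real.sqrt_sq (vnA_nonneg A _)] at h2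

lemma vnA_zero_of (hA : A.IsPositive) {X Y : H →L[ℂ] H} (h : AdjPair A X Y) {x : H}
    (hx : vnA A x = 0) : vnA A (X x) = 0 := by
  have := h.bound hA x
  rw [hx, mul_zero] at this
  exact le_antisymm this (vnA_nonneg A _)

lemma vnA_smul (hA : A.IsPositive) {c : ℝ} (hc : 0 ≤ c) (y : H) :
    vnA A ((c:ℂ) • y) = c * vnA A y := by
  have h : (inner ℂ (A ((c:ℂ) • y)) ((c:ℂ) • y) : ℂ) = ((c * c : ℝ) : ℂ) * inner ℂ (A y) y := by
    rw [map_smul, inner_smul_left, inner_smul_right, Complex.conj_ofReal]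
    push_cast; ring
  rw [vnA, h, RCLike.re_to_complex, Complex.re_ofReal_mul,
    Real.sqrt_mul (mul_nonneg hc hc), Real.sqrt_mul_self hc]
  rfl

lemma exists_unit (hA : A.IsPositive) (hA0 : A ≠ 0) : ∃ x₀ : H, vnA A x₀ = 1 := by
  have hex : ∃ x : H, (inner ℂ (A x) x : ℂ) ≠ 0 := by
    by_contra hc
    push_neg at hc
    have : (A : H →ₗ[ℂ] H) = 0 := (inner_map_self_eq_zero _).mp (fun x => hc x)
    exact hA0 (ContinuousLinearMap.coe_injective (by simpa using this))
  obtain ⟨x, hx⟩ := hex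
  have hre : (inner ℂ (A x) x : ℂ) = ((RCLike.re (inner ℂ (A x) x : ℂ) : ℝ) : ℂ) := by
    have hconj := herm hA x x
    rw [RCLike.re_to_complex]
    exact ((Complex.conj_eq_iff_re).mp hconj.symm).symm
  have hq : 0 < RCLike.re (inner ℂ (A x) x : ℂ) := by
    rcases lt_or_eq_of_le (q_nonneg hA x) with h | h
    · exact h
    · exfalso; apply hx; rw [hre, ← h]; simp
  have hv : 0 < vnA A x := Real.sqrt_pos.mpr hq
  refine ⟨(((vnA A x)⁻¹ : ℝ) : ℂ) • x, ?_⟩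
  rw [vnA_smul hA (inv_nonneg.mpr hv.le), inv_mul_cancel₀ hv.ne']

lemma unit_nonempty (hA : A.IsPositive) (hA0 : A ≠ 0) : {x : H | vnA A x = 1}.Nonempty :=
  exists_unit hA hA0

lemma opnA_bddAbove (hA : A.IsPositive) {X Y : H →L[ℂ] H} (h : AdjPair A X Y) :
    BddAbove ((fun x => vnA A (X x)) '' {x : H | vnA A x = 1}) := by
  refine ⟨Real.sqrt ‖Y ∘L X‖, fun v hv => ?_⟩
  obtain ⟨x, hx, rfl⟩ := hv
  have := h.bound hA x
  rw [Set.mem_setOf_eq.mp hx, mul_one] at this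
  exact this

lemma le_opnA (hA : A.IsPositive) {X Y : H →L[ℂ] H} (h : AdjPair A X Y) {x : H}
    (hx : vnA A x = 1) : vnA A (X x) ≤ opnA A X :=
  le_csSup (opnA_bddAbove hA h) ⟨x, hx, rfl⟩

lemma opnA_le (hA : A.IsPositive) (hA0 : A ≠ 0) {X : H →L[ℂ] H} {c : ℝ}
    (hc : ∀ x : H, vnA A x = 1 → vnA A (X x) ≤ c) : opnA A X ≤ c := by
  apply csSup_le ((unit_nonempty hA hA0).image _)
  rintro v ⟨x, hx, rfl⟩
  exact hc x hx

lemma opnA_nonneg (hA : A.IsPositive) (hA0 : A ≠ 0) {X Y : H →L[ℂ] H} (h : AdjPair A X Y) :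
    0 ≤ opnA A X := by
  obtain ⟨x₀, hx₀⟩ := exists_unit hA hA0
  exact le_trans (vnA_nonneg A (X x₀)) (le_opnA hA h hx₀)

lemma opnA_apply_le (hA : A.IsPositive) {X Y : H →L[ℂ] H} (h : AdjPair A X Y) (x : H) :
    vnA A (X x) ≤ opnA A X * vnA A x := by
  rcases eq_or_lt_of_le (vnA_nonneg A x) with h0 | h0
  · rw [← h0, mul_zero, vnA_zero_of hA h h0.symm]
  · set c := vnA A x with hcdef
    have hx' : vnA A (((c⁻¹ : ℝ) : ℂ) • x) = 1 := by
      rw [vnA_smul hA (inv_nonneg.mpr h0.le), inv_mul_cancel₀ h0.ne']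
    have happ : X (((c⁻¹ : ℝ) : ℂ) • x) = ((c⁻¹ : ℝ) : ℂ) • X x := map_smul X _ _
    have hle := le_opnA hA h hx'
    rw [happ, vnA_smul hA (inv_nonneg.mpr h0.le)] at hle
    calc vnA A (X x) = c * (c⁻¹ * vnA A (X x)) := by field_simp
      _ ≤ c * opnA A X := mul_le_mul_of_nonneg_left hle h0.le
      _ = opnA A X * c := mul_comm _ _

lemma wA_bddAbove (hA : A.IsPositive) {X Y : H →L[ℂ] H} (h : AdjPair A X Y) :
    BddAbove ((fun x => ‖(inner ℂ (A (X x)) x : ℂ)‖) '' {x : H | vnA A x = 1}) := by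
  refine ⟨Real.sqrt ‖Y ∘L X‖, fun v hv => ?_⟩
  obtain ⟨x, hx, rfl⟩ := hv
  have hx1 : vnA A x = 1 := hx
  have h1 : ‖(inner ℂ (A (X x)) x : ℂ)‖ ≤ vnA A (X x) * vnA A x := cs hA _ _
  have h2 := h.bound hA x
  rw [hx1] at h1 h2
  rw [mul_one] at h1 h2
  exact le_trans h1 h2

lemma le_wA (hA : A.IsPositive) {X Y : H →L[ℂ] H} (h : AdjPair A X Y) {x : H}
    (hx : vnA A x = 1) : ‖(inner ℂ (A (X x)) x : ℂ)‖ ≤ wA A X :=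
  le_csSup (wA_bddAbove hA h) ⟨x, hx, rfl⟩

lemma wA_le (hA : A.IsPositive) (hA0 : A ≠ 0) {X : H →L[ℂ] H} {c : ℝ}
    (hc : ∀ x : H, vnA A x = 1 → ‖(inner ℂ (A (X x)) x : ℂ)‖ ≤ c) : wA A X ≤ c := by
  apply csSup_le ((unit_nonempty hA hA0).image _)
  rintro v ⟨x, hx, rfl⟩
  exact hc x hx

lemma wA_nonneg (hA : A.IsPositive) (hA0 : A ≠ 0) {X Y : H →L[ℂ] H} (h : AdjPair A X Y) :
    0 ≤ wA A X := by
  obtain ⟨x₀, hx₀⟩ := exists_unit hA hA0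
  exact le_trans (norm_nonneg _) (le_wA hA h hx₀)

lemma vnA_add (hA : A.IsPositive) (y z : H) : vnA A (y + z) ≤ vnA A y + vnA A z := by
  have hq : RCLike.re (inner ℂ (A (y + z)) (y + z) : ℂ)
      = RCLike.re (inner ℂ (A y) y : ℂ) + 2 * RCLike.re (inner ℂ (A y) z : ℂ)
        + RCLike.re (inner ℂ (A z) z : ℂ) := by
    have hexp : (inner ℂ (A (y + z)) (y + z) : ℂ)
        = inner ℂ (A y) y + inner ℂ (A y) z + inner ℂ (A z) y + inner ℂ (A z) z := by
      rw [map_add, inner_add_left, inner_add_right, inner_add_right]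
      ring
    rw [hexp]
    simp only [RCLike.re_to_complex, Complex.add_re]
    have := re_herm hA z y
    simp only [RCLike.re_to_complex] at this
    rw [this]
    ring
  have hcs : RCLike.re (inner ℂ (A y) z : ℂ) ≤ vnA A y * vnA A z :=
    le_trans (re_le_norm _) (cs hA y z)
  have hb : RCLike.re (inner ℂ (A (y + z)) (y + z) : ℂ) ≤ (vnA A y + vnA A z) ^ 2 := by
    rw [hq]
    have h1 := vnA_sq hA y
    have h2 := vnA_sq hA z
    nlinarith
  calc vnA A (y + z) = Real.sqrt (RCLike.re (inner ℂ (A (y + z)) (y + z) : ℂ)) := rfl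
    _ ≤ Real.sqrt ((vnA A y + vnA A z) ^ 2) := Real.sqrt_le_sqrt hb
    _ = vnA A y + vnA A z := Real.sqrt_sq (add_nonneg (vnA_nonneg A y) (vnA_nonneg A z))

lemma opnA_adj_le (hA : A.IsPositive) (hA0 : A ≠ 0) {X Y : H →L[ℂ] H} (h : AdjPair A X Y) :
    opnA A Y ≤ opnA A X := by
  refine opnA_le hA hA0 (fun x hx => ?_)
  have hsq : vnA A (Y x) ^ 2 ≤ opnA A X * vnA A (Y x) := by
    calc vnA A (Y x) ^ 2 = RCLike.re (inner ℂ (A ((X ∘L Y) x)) x : ℂ) := h.vnA_sq_eq hA x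
      _ ≤ ‖(inner ℂ (A ((X ∘L Y) x)) x : ℂ)‖ := re_le_norm _
      _ ≤ vnA A ((X ∘L Y) x) * vnA A x := cs hA _ _
      _ = vnA A (X (Y x)) := by rw [hx, mul_one]; rfl
      _ ≤ opnA A X * vnA A (Y x) := opnA_apply_le hA h _
  rcases eq_or_lt_of_le (vnA_nonneg A (Y x)) with h0 | h0
  · rw [← h0]; exact opnA_nonneg hA hA0 h
  · nlinarith

lemma opnA_adj_eq (hA : A.IsPositive) (hA0 : A ≠ 0) {X Y : H →L[ℂ] H} (h : AdjPair A X Y) :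
    opnA A Y = opnA A X :=
  le_antisymm (opnA_adj_le hA hA0 h) (opnA_adj_le hA hA0 (h.symm hA))

lemma q_add (hA : A.IsPositive) (u v : H) :
    RCLike.re (inner ℂ (A (u + v)) (u + v) : ℂ)
      = RCLike.re (inner ℂ (A u) u : ℂ) + 2 * RCLike.re (inner ℂ (A u) v : ℂ)
        + RCLike.re (inner ℂ (A v) v : ℂ) := by
  have hexp : (inner ℂ (A (u + v)) (u + v) : ℂ)
      = inner ℂ (A u) u + inner ℂ (A u) v + inner ℂ (A v) u + inner ℂ (A v) v := by
    rw [map_add, inner_add_left, inner_add_right, inner_add_right]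
    ring
  rw [hexp]
  simp only [RCLike.re_to_complex, Complex.add_re]
  have := re_herm hA v u
  simp only [RCLike.re_to_complex] at this
  rw [this]; ring

lemma q_sub (hA : A.IsPositive) (u v : H) :
    RCLike.re (inner ℂ (A (u - v)) (u - v) : ℂ)
      = RCLike.re (inner ℂ (A u) u : ℂ) - 2 * RCLike.re (inner ℂ (A u) v : ℂ)
        + RCLike.re (inner ℂ (A v) v : ℂ) := by
  have hexp : (inner ℂ (A (u - v)) (u - v) : ℂ)
      = inner ℂ (A u) u - inner ℂ (A u) v - inner ℂ (A v) u + inner ℂ (A v) v := by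
    rw [map_sub, inner_sub_left, inner_sub_right, inner_sub_right]
    ring
  rw [hexp]
  simp only [RCLike.re_to_complex, Complex.add_re, Complex.sub_re]
  have := re_herm hA v u
  simp only [RCLike.re_to_complex] at this
  rw [this]; ring

end S7

open S7 in
theorem stmt7 (A T S Ts Ss : H →L[ℂ] H) (hA : A.IsPositive) (hA0 : A ≠ 0)
    (hTs : IsReducedAdjA A T Ts) (hSs : IsReducedAdjA A S Ss) :
    (opnA A (T + S) ≤ Real.sqrt (opnA A (T ∘L Ts + S ∘L Ss) + 2 * wA A (T ∘L Ss)) ∧ opnA A (T - S) ≤ Real.sqrt (opnA A (T ∘L Ts + S ∘L Ss) + 2 * wA A (T ∘L Ss))) ∧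
    Real.sqrt (opnA A (T ∘L Ts + S ∘L Ss) + 2 * wA A (T ∘L Ss)) ≤ opnA A T + opnA A S := by
  have hT : AdjPair A T Ts := hTs.1
  have hS : AdjPair A S Ss := hSs.1
  have hTT : AdjPair A (T ∘L Ts) (T ∘L Ts) := hT.comp (hT.symm hA)
  have hSS : AdjPair A (S ∘L Ss) (S ∘L Ss) := hS.comp (hS.symm hA)
  have hTSs : AdjPair A (T ∘L Ss) (S ∘L Ts) := hT.comp (hS.symm hA)
  have hSum : AdjPair A (T ∘L Ts + S ∘L Ss) (T ∘L Ts + S ∘L Ss) := hTT.add hSS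
  set R : ℝ := opnA A (T ∘L Ts + S ∘L Ss) + 2 * wA A (T ∘L Ss) with hR
  -- pointwise bounds for unit vectors
  have hkey : ∀ x : H, vnA A x = 1 →
      (vnA A ((Ts + Ss) x) ^ 2 ≤ R ∧ vnA A ((Ts - Ss) x) ^ 2 ≤ R) := by
    intro x hx
    have key1 : vnA A (Ts x) ^ 2 = RCLike.re (inner ℂ (A ((T ∘L Ts) x)) x : ℂ) :=
      hT.vnA_sq_eq hA x
    have key2 : vnA A (Ss x) ^ 2 = RCLike.re (inner ℂ (A ((S ∘L Ss) x)) x : ℂ) :=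
      hS.vnA_sq_eq hA x
    have cross : RCLike.re (inner ℂ (A (Ts x)) (Ss x) : ℂ)
        = RCLike.re (inner ℂ (A ((T ∘L Ss) x)) x : ℂ) := by
      rw [hT.inner_eq x (Ss x), ← re_herm hA]
      rfl
    have hsum_val : RCLike.re (inner ℂ (A ((T ∘L Ts + S ∘L Ss) x)) x : ℂ)
        = RCLike.re (inner ℂ (A ((T ∘L Ts) x)) x : ℂ)
          + RCLike.re (inner ℂ (A ((S ∘L Ss) x)) x : ℂ) := by
      have : ((T ∘L Ts + S ∘L Ss) x) = (T ∘L Ts) x + (S ∘L Ss) x := rfl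
      rw [this, map_add, inner_add_left]
      simp [RCLike.re_to_complex]
    have hb1 : RCLike.re (inner ℂ (A ((T ∘L Ts + S ∘L Ss) x)) x : ℂ)
        ≤ opnA A (T ∘L Ts + S ∘L Ss) := by
      calc RCLike.re (inner ℂ (A ((T ∘L Ts + S ∘L Ss) x)) x : ℂ)
          ≤ ‖(inner ℂ (A ((T ∘L Ts + S ∘L Ss) x)) x : ℂ)‖ := re_le_norm _
        _ ≤ vnA A ((T ∘L Ts + S ∘L Ss) x) * vnA A x := cs hA _ _
        _ = vnA A ((T ∘L Ts + S ∘L Ss) x) := by rw [hx, mul_one]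
        _ ≤ opnA A (T ∘L Ts + S ∘L Ss) := le_opnA hA hSum hx
    have hb2 : |RCLike.re (inner ℂ (A ((T ∘L Ss) x)) x : ℂ)| ≤ wA A (T ∘L Ss) := by
      refine le_trans ?_ (le_wA hA hTSs hx)
      exact RCLike.abs_re_le_norm _
    have hadd : vnA A ((Ts + Ss) x) ^ 2
        = vnA A (Ts x) ^ 2 + 2 * RCLike.re (inner ℂ (A (Ts x)) (Ss x) : ℂ)
          + vnA A (Ss x) ^ 2 := by
      have happ : (Ts + Ss) x = Ts x + Ss x := rfl
      rw [happ, vnA_sq hA, q_add hA, ← vnA_sq hA, ← vnA_sq hA]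
    have hsub : vnA A ((Ts - Ss) x) ^ 2
        = vnA A (Ts x) ^ 2 - 2 * RCLike.re (inner ℂ (A (Ts x)) (Ss x) : ℂ)
          + vnA A (Ss x) ^ 2 := by
      have happ : (Ts - Ss) x = Ts x - Ss x := rfl
      rw [happ, vnA_sq hA, q_sub hA, ← vnA_sq hA, ← vnA_sq hA]
    have habs := abs_le.mp hb2
    constructor
    · rw [hadd, key1, key2, cross, hR]
      have := hsum_val
      linarith [habs.2, hb1]
    · rw [hsub, key1, key2, cross, hR]
      linarith [habs.1, hb1]
  have hRnn : 0 ≤ R := by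
    obtain ⟨x₀, hx₀⟩ := exists_unit hA hA0
    have := (hkey x₀ hx₀).1
    nlinarith [sq_nonneg (vnA A ((Ts + Ss) x₀))]
  -- Part 1
  have hadd_pair : AdjPair A (T + S) (Ts + Ss) := hT.add hS
  have hsub_pair : AdjPair A (T - S) (Ts - Ss) := hT.sub hS
  have part1a : opnA A (T + S) ≤ Real.sqrt R := by
    rw [← opnA_adj_eq hA hA0 hadd_pair]
    refine opnA_le hA hA0 (fun x hx => ?_)
    have h1 := (hkey x hx).1
    calc vnA A ((Ts + Ss) x) = Real.sqrt (vnA A ((Ts + Ss) x) ^ 2) :=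
          (Real.sqrt_sq (vnA_nonneg A _)).symm
      _ ≤ Real.sqrt R := Real.sqrt_le_sqrt h1
  have part1b : opnA A (T - S) ≤ Real.sqrt R := by
    rw [← opnA_adj_eq hA hA0 hsub_pair]
    refine opnA_le hA hA0 (fun x hx => ?_)
    have h1 := (hkey x hx).2
    calc vnA A ((Ts - Ss) x) = Real.sqrt (vnA A ((Ts - Ss) x) ^ 2) :=
          (Real.sqrt_sq (vnA_nonneg A _)).symm
      _ ≤ Real.sqrt R := Real.sqrt_le_sqrt h1
  -- Part 2
  have hTeq : opnA A Ts = opnA A T := opnA_adj_eq hA hA0 hT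
  have hSeq : opnA A Ss = opnA A S := opnA_adj_eq hA hA0 hS
  have hTnn : 0 ≤ opnA A T := opnA_nonneg hA hA0 hT
  have hSnn : 0 ≤ opnA A S := opnA_nonneg hA hA0 hS
  have bound1 : opnA A (T ∘L Ts + S ∘L Ss) ≤ opnA A T ^ 2 + opnA A S ^ 2 := by
    refine opnA_le hA hA0 (fun x hx => ?_)
    have happ : (T ∘L Ts + S ∘L Ss) x = (T ∘L Ts) x + (S ∘L Ss) x := rfl
    have h1 : vnA A ((T ∘L Ts) x) ≤ opnA A T * opnA A T := by
      calc vnA A ((T ∘L Ts) x) = vnA A (T (Ts x)) := rfl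
        _ ≤ opnA A T * vnA A (Ts x) := opnA_apply_le hA hT _
        _ ≤ opnA A T * opnA A Ts :=
            mul_le_mul_of_nonneg_left (le_opnA hA (hT.symm hA) hx) hTnn
        _ = opnA A T * opnA A T := by rw [hTeq]
    have h2 : vnA A ((S ∘L Ss) x) ≤ opnA A S * opnA A S := by
      calc vnA A ((S ∘L Ss) x) = vnA A (S (Ss x)) := rfl
        _ ≤ opnA A S * vnA A (Ss x) := opnA_apply_le hA hS _
        _ ≤ opnA A S * opnA A Ss :=
            mul_le_mul_of_nonneg_left (le_opnA hA (hS.symm hA) hx) hSnn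
        _ = opnA A S * opnA A S := by rw [hSeq]
    calc vnA A ((T ∘L Ts + S ∘L Ss) x) ≤ vnA A ((T ∘L Ts) x) + vnA A ((S ∘L Ss) x) := by
          rw [happ]; exact vnA_add hA _ _
      _ ≤ opnA A T ^ 2 + opnA A S ^ 2 := by nlinarith
  have bound2 : wA A (T ∘L Ss) ≤ opnA A T * opnA A S := by
    refine wA_le hA hA0 (fun x hx => ?_)
    calc ‖(inner ℂ (A ((T ∘L Ss) x)) x : ℂ)‖ ≤ vnA A ((T ∘L Ss) x) * vnA A x := cs hA _ _
      _ = vnA A (T (Ss x)) := by rw [hx, mul_one]; rfl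
      _ ≤ opnA A T * vnA A (Ss x) := opnA_apply_le hA hT _
      _ ≤ opnA A T * opnA A Ss :=
          mul_le_mul_of_nonneg_left (le_opnA hA (hS.symm hA) hx) hTnn
      _ = opnA A T * opnA A S := by rw [hSeq]
  have part2 : Real.sqrt R ≤ opnA A T + opnA A S := by
    have hle : R ≤ (opnA A T + opnA A S) ^ 2 := by
      rw [hR]; nlinarith
    calc Real.sqrt R ≤ Real.sqrt ((opnA A T + opnA A S) ^ 2) := Real.sqrt_le_sqrt hle
      _ = opnA A T + opnA A S := Real.sqrt_sq (add_nonneg hTnn hSnn)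
  exact ⟨⟨part1a, part1b⟩, part2⟩
end

section
/- Let T and S be bounded linear operators on H admitting reduced A-adjoints T^♯ and S^♯. Then ‖T + S‖_A ≤ √( (1/2)·(‖T‖_A² + ‖S‖_A² + √((‖T‖_A² − ‖S‖_A²)² + 4‖TS^♯‖_A²)) + 2ω_A(S^♯T) ) ≤ ‖T‖_A + ‖S‖_A. -/
open ContinuousLinearMap

variable {H : Type*} [NormedAddCommGroup H] [InnerProductSpace ℂ H] [CompleteSpace H]

section auxStmt9
variable {H : Type*} [NormedAddCommGroup H] [InnerProductSpace ℂ H] [CompleteSpace H]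

lemma aux_sqrt_exists (A : H →L[ℂ] H) (hA : A.IsPositive) :
    ∃ B : H →L[ℂ] H, IsSelfAdjoint B ∧ B * B = A := by
  have h0 : (0 : H →L[ℂ] H) ≤ A := (nonneg_iff_isPositive A).mpr hA
  exact ⟨CFC.sqrt A, IsSelfAdjoint.of_nonneg (CFC.sqrt_nonneg A), CFC.sqrt_mul_sqrt_self A h0⟩

lemma aux_sa_swap {B : H →L[ℂ] H} (hB : IsSelfAdjoint B) (x y : H) :
    (inner ℂ (B x) y : ℂ) = inner ℂ x (B y) := by
  conv_lhs => rw [← hB.adjoint_eq]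
  rw [adjoint_inner_left]

lemma aux_innerA_eq {A B : H →L[ℂ] H} (hB : IsSelfAdjoint B) (hBA : B * B = A) (x y : H) :
    (inner ℂ (A x) y : ℂ) = inner ℂ (B x) (B y) := by
  have : A x = B (B x) := by rw [← hBA]; rfl
  rw [this, aux_sa_swap hB, ← aux_sa_swap hB]

lemma aux_vnA_eq {A B : H →L[ℂ] H} (hB : IsSelfAdjoint B) (hBA : B * B = A) (x : H) :
    vnA A x = ‖B x‖ := by
  rw [vnA, aux_innerA_eq hB hBA, inner_self_eq_norm_sq, Real.sqrt_sq (norm_nonneg _)]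

lemma aux_asa_pow {A W : H →L[ℂ] H} (hW : A * W = star W * A) (n : ℕ) :
    A * W ^ n = star (W ^ n) * A := by
  induction n with
  | zero => simp
  | succ n ih =>
      rw [pow_succ, ← mul_assoc, ih, mul_assoc, hW, ← mul_assoc, ← star_mul, ← pow_succ']
      rw [pow_succ]

lemma aux_step {A B : H →L[ℂ] H} (hB : IsSelfAdjoint B) (hBA : B * B = A)
    {W : H →L[ℂ] H} (hW : A * W = star W * A) (x : H) :
    ‖B (W x)‖ ^ 2 ≤ ‖B x‖ * ‖B (W (W x))‖ := by
  have h1 : (inner ℂ (A (W x)) (W x) : ℂ) = inner ℂ (A x) (W (W x)) := by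
    have : A (W x) = (adjoint W) (A x) := by
      rw [← star_eq_adjoint]
      exact congrFun (congrArg DFunLike.coe hW) x
    rw [this, adjoint_inner_left]
  have h2 : ‖B (W x)‖ ^ 2 = RCLike.re (inner ℂ (B x) (B (W (W x))) : ℂ) := by
    rw [← inner_self_eq_norm_sq (𝕜 := ℂ), ← aux_innerA_eq hB hBA, h1, aux_innerA_eq hB hBA]
  calc ‖B (W x)‖ ^ 2 = RCLike.re (inner ℂ (B x) (B (W (W x))) : ℂ) := h2
    _ ≤ ‖(inner ℂ (B x) (B (W (W x))) : ℂ)‖ := RCLike.re_le_norm _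
    _ ≤ ‖B x‖ * ‖B (W (W x))‖ := norm_inner_le_norm _ _

lemma aux_asa_bound {A B : H →L[ℂ] H} (hB : IsSelfAdjoint B) (hBA : B * B = A)
    {Z : H →L[ℂ] H} (hZ : A * Z = star Z * A) (x : H) :
    ‖B (Z x)‖ ≤ ‖Z‖ * ‖B x‖ := by
  rcases eq_or_lt_of_le (norm_nonneg (B x)) with hx | hx
  · -- ‖B x‖ = 0
    have h0 : ‖B (Z x)‖ ^ 2 ≤ 0 := by
      have := aux_step hB hBA hZ x
      rw [← hx] at this
      simpa using this
    have : ‖B (Z x)‖ = 0 := by nlinarith [norm_nonneg (B (Z x)), sq_nonneg ‖B (Z x)‖]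
    rw [this, ← hx, mul_zero]
  rcases eq_or_lt_of_le (norm_nonneg Z) with hZ0 | hZ0
  · have : Z = 0 := by rw [← norm_eq_zero, ← hZ0]
    simp [this]
  -- main case
  have key : ∀ n : ℕ, ‖B (Z x)‖ ^ (2 ^ n) * ‖B x‖ ≤ ‖B x‖ ^ (2 ^ n) * ‖B ((Z ^ (2 ^ n)) x)‖ := by
    intro n
    induction n with
    | zero => simp [mul_comm]
    | succ n ih =>
        have hpow : Z ^ (2 ^ (n + 1)) = Z ^ (2 ^ n) * Z ^ (2 ^ n) := by
          rw [← pow_add, ← two_mul, ← pow_succ']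
        have hstep : ‖B ((Z ^ (2 ^ n)) x)‖ ^ 2 ≤ ‖B x‖ * ‖B ((Z ^ (2 ^ (n + 1))) x)‖ := by
          have := aux_step hB hBA (aux_asa_pow hZ (2 ^ n)) x
          have he : (Z ^ (2 ^ n)) ((Z ^ (2 ^ n)) x) = (Z ^ (2 ^ (n + 1))) x := by
            rw [hpow]; rfl
          rwa [he] at this
        have hsq : (‖B (Z x)‖ ^ (2 ^ n) * ‖B x‖) ^ 2 ≤ (‖B x‖ ^ (2 ^ n) * ‖B ((Z ^ (2 ^ n)) x)‖) ^ 2 :=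
          pow_le_pow_left₀ (by positivity) ih 2
        have h2 : ‖B (Z x)‖ ^ (2 ^ (n + 1)) * ‖B x‖ ^ 2 ≤
            ‖B x‖ ^ (2 ^ (n + 1)) * (‖B x‖ * ‖B ((Z ^ (2 ^ (n + 1))) x)‖) := by
          have e1 : (‖B (Z x)‖ ^ (2 ^ n) * ‖B x‖) ^ 2 = ‖B (Z x)‖ ^ (2 ^ (n + 1)) * ‖B x‖ ^ 2 := by
            rw [pow_succ 2 n]; ring
          have e2 : (‖B x‖ ^ (2 ^ n) * ‖B ((Z ^ (2 ^ n)) x)‖) ^ 2 =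
              ‖B x‖ ^ (2 ^ (n + 1)) * ‖B ((Z ^ (2 ^ n)) x)‖ ^ 2 := by
            rw [pow_succ 2 n]; ring
          calc ‖B (Z x)‖ ^ (2 ^ (n + 1)) * ‖B x‖ ^ 2 = (‖B (Z x)‖ ^ (2 ^ n) * ‖B x‖) ^ 2 := e1.symm
            _ ≤ (‖B x‖ ^ (2 ^ n) * ‖B ((Z ^ (2 ^ n)) x)‖) ^ 2 := hsq
            _ = ‖B x‖ ^ (2 ^ (n + 1)) * ‖B ((Z ^ (2 ^ n)) x)‖ ^ 2 := e2
            _ ≤ ‖B x‖ ^ (2 ^ (n + 1)) * (‖B x‖ * ‖B ((Z ^ (2 ^ (n + 1))) x)‖) :=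
                mul_le_mul_of_nonneg_left hstep (by positivity)
        have := mul_le_mul_of_nonneg_left h2 (le_of_lt (inv_pos.mpr hx))
        calc ‖B (Z x)‖ ^ (2 ^ (n + 1)) * ‖B x‖
            = ‖B x‖⁻¹ * (‖B (Z x)‖ ^ (2 ^ (n + 1)) * ‖B x‖ ^ 2) := by
              field_simp
          _ ≤ ‖B x‖⁻¹ * (‖B x‖ ^ (2 ^ (n + 1)) * (‖B x‖ * ‖B ((Z ^ (2 ^ (n + 1))) x)‖)) := this
          _ = ‖B x‖ ^ (2 ^ (n + 1)) * ‖B ((Z ^ (2 ^ (n + 1))) x)‖ := by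
              field_simp
  by_contra hcon
  push_neg at hcon
  -- hcon : ‖Z‖ * ‖B x‖ < ‖B (Z x)‖
  have hv : 0 < ‖Z‖ * ‖B x‖ := mul_pos hZ0 hx
  set u := ‖B (Z x)‖
  set v := ‖Z‖ * ‖B x‖
  have ht : 1 < u / v := (one_lt_div hv).mpr hcon
  obtain ⟨n, hn⟩ := pow_unbounded_of_one_lt (‖B‖ * ‖x‖ / ‖B x‖) ht
  have hbig : ‖B‖ * ‖x‖ / ‖B x‖ < (u / v) ^ (2 ^ n) := by
    calc ‖B‖ * ‖x‖ / ‖B x‖ < (u / v) ^ n := hn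
      _ ≤ (u / v) ^ (2 ^ n) := pow_le_pow_right₀ (le_of_lt ht) (Nat.le_of_lt (Nat.lt_two_pow_self (n := n)))
  have hub : ‖B ((Z ^ (2 ^ n)) x)‖ ≤ ‖B‖ * ‖Z‖ ^ (2 ^ n) * ‖x‖ := by
    calc ‖B ((Z ^ (2 ^ n)) x)‖ ≤ ‖B‖ * ‖(Z ^ (2 ^ n)) x‖ := le_opNorm _ _
      _ ≤ ‖B‖ * (‖Z ^ (2 ^ n)‖ * ‖x‖) := by
          exact mul_le_mul_of_nonneg_left (le_opNorm _ _) (norm_nonneg _)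
      _ ≤ ‖B‖ * (‖Z‖ ^ (2 ^ n) * ‖x‖) := by
          have hZp : ‖Z ^ (2 ^ n)‖ ≤ ‖Z‖ ^ (2 ^ n) := norm_pow_le' Z (pow_pos (by norm_num) n)
          exact mul_le_mul_of_nonneg_left
            (mul_le_mul_of_nonneg_right hZp (norm_nonneg x)) (norm_nonneg B)
      _ = ‖B‖ * ‖Z‖ ^ (2 ^ n) * ‖x‖ := by ring
  have hk := key n
  have hchain : u ^ (2 ^ n) * ‖B x‖ ≤ ‖B x‖ ^ (2 ^ n) * (‖B‖ * ‖Z‖ ^ (2 ^ n) * ‖x‖) :=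
    le_trans hk (mul_le_mul_of_nonneg_left hub (by positivity))
  -- derive contradiction: (u/v)^(2^n) ≤ ‖B‖‖x‖/‖B x‖
  have hle : (u / v) ^ (2 ^ n) ≤ ‖B‖ * ‖x‖ / ‖B x‖ := by
    rw [div_pow, div_le_div_iff₀ (by positivity) hx]
    have hv_pow : v ^ (2 ^ n) = ‖Z‖ ^ (2 ^ n) * ‖B x‖ ^ (2 ^ n) := by rw [mul_pow]
    rw [hv_pow]
    calc u ^ 2 ^ n * ‖B x‖ ≤ ‖B x‖ ^ (2 ^ n) * (‖B‖ * ‖Z‖ ^ (2 ^ n) * ‖x‖) := hchain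
      _ = ‖B‖ * ‖x‖ * (‖Z‖ ^ 2 ^ n * ‖B x‖ ^ 2 ^ n) := by ring
  exact absurd (lt_of_lt_of_le hbig hle) (lt_irrefl _)

lemma aux_starA {A B : H →L[ℂ] H} (hB : IsSelfAdjoint B) (hBA : B * B = A) :
    star A = A := by
  rw [← hBA, star_mul, hB.star_eq]

/-- flip an A-adjoint relation -/
lemma aux_flip {A B : H →L[ℂ] H} (hB : IsSelfAdjoint B) (hBA : B * B = A)
    {X Y : H →L[ℂ] H} (hXY : A * X = star Y * A) : A * Y = star X * A := by
  have := congrArg star hXY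
  rw [star_mul, star_mul, star_star, aux_starA hB hBA] at this
  exact this.symm

lemma aux_adj_bound {A B : H →L[ℂ] H} (hB : IsSelfAdjoint B) (hBA : B * B = A)
    {X Y : H →L[ℂ] H} (hXY : A * X = star Y * A) :
    ∃ K : ℝ, 0 ≤ K ∧ ∀ x, ‖B (X x)‖ ≤ K * ‖B x‖ := by
  refine ⟨Real.sqrt ‖Y * X‖, Real.sqrt_nonneg _, fun x => ?_⟩
  have hYX : A * (Y * X) = star (Y * X) * A := by
    rw [star_mul, ← mul_assoc, aux_flip hB hBA hXY, mul_assoc, hXY, mul_assoc]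
  have h1 : ‖B (X x)‖ ^ 2 ≤ ‖B x‖ * ‖B ((Y * X) x)‖ := by
    have hAx : A (X x) = (adjoint Y) (A x) := by
      rw [← star_eq_adjoint]
      exact congrFun (congrArg DFunLike.coe hXY) x
    have h2 : ‖B (X x)‖ ^ 2 = RCLike.re (inner ℂ (B x) (B ((Y * X) x)) : ℂ) := by
      rw [← inner_self_eq_norm_sq (𝕜 := ℂ), ← aux_innerA_eq hB hBA, hAx, adjoint_inner_left,
        aux_innerA_eq hB hBA]
      rfl
    calc ‖B (X x)‖ ^ 2 = RCLike.re (inner ℂ (B x) (B ((Y * X) x)) : ℂ) := h2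
      _ ≤ ‖(inner ℂ (B x) (B ((Y * X) x)) : ℂ)‖ := RCLike.re_le_norm _
      _ ≤ ‖B x‖ * ‖B ((Y * X) x)‖ := norm_inner_le_norm _ _
  have h3 : ‖B (X x)‖ ^ 2 ≤ ‖Y * X‖ * ‖B x‖ ^ 2 := by
    calc ‖B (X x)‖ ^ 2 ≤ ‖B x‖ * ‖B ((Y * X) x)‖ := h1
      _ ≤ ‖B x‖ * (‖Y * X‖ * ‖B x‖) := by
          exact mul_le_mul_of_nonneg_left (aux_asa_bound hB hBA hYX x) (norm_nonneg _)
      _ = ‖Y * X‖ * ‖B x‖ ^ 2 := by ring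
  refine le_of_pow_le_pow_left₀ two_ne_zero (by positivity) ?_
  calc ‖B (X x)‖ ^ 2 ≤ ‖Y * X‖ * ‖B x‖ ^ 2 := h3
    _ = (Real.sqrt ‖Y * X‖ * ‖B x‖) ^ 2 := by
        rw [mul_pow, Real.sq_sqrt (norm_nonneg _)]

lemma aux_unit_exists {A B : H →L[ℂ] H} (hB : IsSelfAdjoint B) (hBA : B * B = A)
    (hA0 : A ≠ 0) : ∃ x : H, ‖B x‖ = 1 := by
  have hB0 : B ≠ 0 := by
    intro h; apply hA0; rw [← hBA, h, mul_zero]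
  obtain ⟨y, hy⟩ : ∃ y, B y ≠ 0 := by
    by_contra h; push_neg at h
    exact hB0 (ContinuousLinearMap.ext fun y => by simp [h y])
  refine ⟨((‖B y‖ : ℂ))⁻¹ • y, ?_⟩
  have : B (((‖B y‖ : ℂ))⁻¹ • y) = ((‖B y‖ : ℂ))⁻¹ • B y := map_smul _ _ _
  rw [this, norm_smul]
  have h0 : ‖B y‖ ≠ 0 := norm_ne_zero_iff.mpr hy
  simp [norm_inv, h0]

section opnA_lemmas
variable {A B : H →L[ℂ] H} (hB : IsSelfAdjoint B) (hBA : B * B = A)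
  {X : H →L[ℂ] H} {K : ℝ} (hK : 0 ≤ K) (hbd : ∀ x, ‖B (X x)‖ ≤ K * ‖B x‖)

include hB hBA hK hbd

lemma aux_opnA_bdd : BddAbove ((fun x => vnA A (X x)) '' {x : H | vnA A x = 1}) := by
  refine ⟨K, ?_⟩
  rintro r ⟨x, hx, rfl⟩
  simp only [Set.mem_setOf_eq, aux_vnA_eq hB hBA] at hx ⊢
  calc ‖B (X x)‖ ≤ K * ‖B x‖ := hbd x
    _ = K := by rw [hx, mul_one]

lemma aux_opnA_sharp : ∀ x, ‖B (X x)‖ ≤ opnA A X * ‖B x‖ := by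
  intro x
  rcases eq_or_lt_of_le (norm_nonneg (B x)) with hx | hx
  · have h1 : ‖B (X x)‖ ≤ 0 := by
      have := hbd x; rw [← hx, mul_zero] at this; exact this
    have : ‖B (X x)‖ = 0 := le_antisymm h1 (norm_nonneg _)
    rw [this, ← hx, mul_zero]
  · set u := ((‖B x‖ : ℂ))⁻¹ • x with hu
    have hBu : ‖B u‖ = 1 := by
      rw [hu, map_smul, norm_smul]
      simp [norm_inv, ne_of_gt hx]
    have hmem : vnA A (X u) ∈ (fun x => vnA A (X x)) '' {x : H | vnA A x = 1} :=
      ⟨u, by simp only [Set.mem_setOf_eq, aux_vnA_eq hB hBA]; exact hBu, rfl⟩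
    have hle : vnA A (X u) ≤ opnA A X :=
      le_csSup (aux_opnA_bdd hB hBA hK hbd) hmem
    have hXu : ‖B (X u)‖ = ‖B x‖⁻¹ * ‖B (X x)‖ := by
      rw [hu, map_smul, map_smul, norm_smul]
      simp [norm_inv]
    rw [aux_vnA_eq hB hBA, hXu] at hle
    calc ‖B (X x)‖ = ‖B x‖ * (‖B x‖⁻¹ * ‖B (X x)‖) := by
          field_simp
      _ ≤ ‖B x‖ * opnA A X := mul_le_mul_of_nonneg_left hle (le_of_lt hx)
      _ = opnA A X * ‖B x‖ := mul_comm _ _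

lemma aux_opnA_nonneg : 0 ≤ opnA A X :=
  Real.sSup_nonneg (by rintro r ⟨x, hx, rfl⟩; exact Real.sqrt_nonneg _)

lemma aux_opnA_le (hA0 : A ≠ 0) {M : ℝ}
    (hM : ∀ x, ‖B x‖ = 1 → ‖B (X x)‖ ≤ M) : opnA A X ≤ M := by
  obtain ⟨x0, hx0⟩ := aux_unit_exists hB hBA hA0
  apply csSup_le
  · exact ⟨vnA A (X x0), ⟨x0, by simp only [Set.mem_setOf_eq, aux_vnA_eq hB hBA]; exact hx0, rfl⟩⟩
  · rintro r ⟨x, hx, rfl⟩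
    simp only [Set.mem_setOf_eq, aux_vnA_eq hB hBA] at hx ⊢
    exact hM x hx

lemma aux_wA_bdd : BddAbove ((fun x => ‖(inner ℂ (A (X x)) x : ℂ)‖) '' {x : H | vnA A x = 1}) := by
  refine ⟨K, ?_⟩
  rintro r ⟨x, hx, rfl⟩
  simp only [Set.mem_setOf_eq, aux_vnA_eq hB hBA] at hx
  calc ‖(inner ℂ (A (X x)) x : ℂ)‖ = ‖(inner ℂ (B (X x)) (B x) : ℂ)‖ := by
        rw [aux_innerA_eq hB hBA]
    _ ≤ ‖B (X x)‖ * ‖B x‖ := norm_inner_le_norm _ _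
    _ ≤ (K * ‖B x‖) * ‖B x‖ := by
        exact mul_le_mul_of_nonneg_right (hbd x) (norm_nonneg _)
    _ = K := by rw [hx]; ring

lemma aux_le_wA {x : H} (hx : ‖B x‖ = 1) : ‖(inner ℂ (A (X x)) x : ℂ)‖ ≤ wA A X :=
  le_csSup (aux_wA_bdd hB hBA hK hbd)
    ⟨x, by simp only [Set.mem_setOf_eq, aux_vnA_eq hB hBA]; exact hx, rfl⟩

lemma aux_wA_nonneg : 0 ≤ wA A X :=
  Real.sSup_nonneg (by rintro r ⟨x, hx, rfl⟩; exact norm_nonneg _)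

lemma aux_wA_le (hA0 : A ≠ 0) {M : ℝ}
    (hM : ∀ x, ‖B x‖ = 1 → ‖(inner ℂ (A (X x)) x : ℂ)‖ ≤ M) : wA A X ≤ M := by
  obtain ⟨x0, hx0⟩ := aux_unit_exists hB hBA hA0
  apply csSup_le
  · exact ⟨_, ⟨x0, by simp only [Set.mem_setOf_eq, aux_vnA_eq hB hBA]; exact hx0, rfl⟩⟩
  · rintro r ⟨x, hx, rfl⟩
    simp only [Set.mem_setOf_eq, aux_vnA_eq hB hBA] at hx
    exact hM x hx

end opnA_lemmas

/-- scalar Kittaneh-type inequality -/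
lemma aux_scalar {a b c p q : ℝ} (ha : 0 ≤ a) (hb : 0 ≤ b) (hc : 0 ≤ c)
    (hp : 0 ≤ p) (hq : 0 ≤ q) :
    (a * p) ^ 2 + (b * q) ^ 2 + 2 * (c * p * q) ≤
      ((1:ℝ)/2) * (a ^ 2 + b ^ 2 + Real.sqrt ((a ^ 2 - b ^ 2) ^ 2 + 4 * c ^ 2)) * (p ^ 2 + q ^ 2) := by
  set s := Real.sqrt ((a ^ 2 - b ^ 2) ^ 2 + 4 * c ^ 2) with hs
  have hs0 : 0 ≤ s := Real.sqrt_nonneg _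
  have hs2 : s ^ 2 = (a ^ 2 - b ^ 2) ^ 2 + 4 * c ^ 2 := Real.sq_sqrt (by positivity)
  have hCS : ((a ^ 2 - b ^ 2) * (p ^ 2 - q ^ 2) + 4 * (c * p * q)) ^ 2 ≤
      s ^ 2 * (p ^ 2 + q ^ 2) ^ 2 := by
    rw [hs2]
    nlinarith [sq_nonneg ((a ^ 2 - b ^ 2) * (2 * p * q) - 2 * c * (p ^ 2 - q ^ 2))]
  have hL : (a ^ 2 - b ^ 2) * (p ^ 2 - q ^ 2) + 4 * (c * p * q) ≤ s * (p ^ 2 + q ^ 2) := by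
    nlinarith [hCS, mul_nonneg hs0 (by positivity : (0:ℝ) ≤ p ^ 2 + q ^ 2)]
  nlinarith [hL]


end auxStmt9

set_option maxHeartbeats 1000000 in
theorem stmt9 (A T S Ts Ss : H →L[ℂ] H) (hA : A.IsPositive) (hA0 : A ≠ 0)
    (hTs : IsReducedAdjA A T Ts) (hSs : IsReducedAdjA A S Ss) :
    opnA A (T + S) ≤ Real.sqrt ((1/2) * ((opnA A T)^2 + (opnA A S)^2 + Real.sqrt (((opnA A T)^2 - (opnA A S)^2)^2 + 4 * (opnA A (T ∘L Ss))^2)) + 2 * wA A (Ss ∘L T)) ∧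
    Real.sqrt ((1/2) * ((opnA A T)^2 + (opnA A S)^2 + Real.sqrt (((opnA A T)^2 - (opnA A S)^2)^2 + 4 * (opnA A (T ∘L Ss))^2)) + 2 * wA A (Ss ∘L T)) ≤ opnA A T + opnA A S := by
  obtain ⟨B, hB, hBA⟩ := aux_sqrt_exists A hA
  -- adjoint relations in mul/star form
  have hT1 : A * Ts = star T * A := by rw [star_eq_adjoint]; exact hTs.1
  have hS1 : A * Ss = star S * A := by rw [star_eq_adjoint]; exact hSs.1
  have hT2 : A * T = star Ts * A := aux_flip hB hBA hT1
  have hS2 : A * S = star Ss * A := aux_flip hB hBA hS1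
  have hTS : A * (T + S) = star (Ts + Ss) * A := by
    rw [mul_add, hT2, hS2, star_add, add_mul]
  have hTSs : A * (T * Ss) = star (S * Ts) * A := by
    rw [← mul_assoc, hT2, mul_assoc, hS1, star_mul, mul_assoc]
  have hSsT : A * (Ss * T) = star (Ts * S) * A := by
    rw [← mul_assoc, hS1, mul_assoc, hT2, star_mul, mul_assoc]
  -- boundedness
  obtain ⟨K1, hK1, hb1⟩ := aux_adj_bound hB hBA hT2
  obtain ⟨K2, hK2, hb2⟩ := aux_adj_bound hB hBA hS2
  obtain ⟨K3, hK3, hb3⟩ := aux_adj_bound hB hBA hTS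
  obtain ⟨K4, hK4, hb4⟩ := aux_adj_bound hB hBA hTSs
  obtain ⟨K5, hK5, hb5⟩ := aux_adj_bound hB hBA hSsT
  set a := opnA A T with ha_def
  set b := opnA A S with hb_def
  set c := opnA A (T ∘L Ss) with hc_def
  set w := wA A (Ss ∘L T) with hw_def
  have hc_eq : T ∘L Ss = T * Ss := rfl
  have hw_eq : Ss ∘L T = Ss * T := rfl
  have ha0 : 0 ≤ a := aux_opnA_nonneg hB hBA hK1 hb1
  have hb0 : 0 ≤ b := aux_opnA_nonneg hB hBA hK2 hb2
  have hc0 : 0 ≤ c := by rw [hc_def, hc_eq]; exact aux_opnA_nonneg hB hBA hK4 hb4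
  have hw0 : 0 ≤ w := by rw [hw_def, hw_eq]; exact aux_wA_nonneg hB hBA hK5 hb5
  -- sharp bounds
  have hTa : ∀ x, ‖B (T x)‖ ≤ a * ‖B x‖ := aux_opnA_sharp hB hBA hK1 hb1
  have hSb : ∀ x, ‖B (S x)‖ ≤ b * ‖B x‖ := aux_opnA_sharp hB hBA hK2 hb2
  have hTSsc : ∀ x, ‖B (T (Ss x))‖ ≤ c * ‖B x‖ := by
    have := aux_opnA_sharp hB hBA hK4 hb4
    rw [hc_def, hc_eq]; exact this
  -- sharp bound for the adjoints Ts, Ss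
  have hadj_sharp : ∀ (X Y : H →L[ℂ] H), (A * Y = star X * A) →
      (∀ z, ‖B (X z)‖ ≤ opnA A X * ‖B z‖) → (0 ≤ opnA A X) →
      ∀ x, ‖B (Y x)‖ ≤ opnA A X * ‖B x‖ := by
    intro X Y hY hXs hX0 x
    have h2 : ‖B (Y x)‖ ^ 2 = RCLike.re (inner ℂ (B x) (B (X (Y x))) : ℂ) := by
      have hAx : A (Y x) = (adjoint X) (A x) := by
        rw [← star_eq_adjoint]
        exact congrFun (congrArg DFunLike.coe hY) x
      rw [← inner_self_eq_norm_sq (𝕜 := ℂ), ← aux_innerA_eq hB hBA, hAx, adjoint_inner_left,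
        aux_innerA_eq hB hBA]
    have h3 : ‖B (Y x)‖ ^ 2 ≤ ‖B x‖ * (opnA A X * ‖B (Y x)‖) := by
      calc ‖B (Y x)‖ ^ 2 = RCLike.re (inner ℂ (B x) (B (X (Y x))) : ℂ) := h2
        _ ≤ ‖(inner ℂ (B x) (B (X (Y x))) : ℂ)‖ := RCLike.re_le_norm _
        _ ≤ ‖B x‖ * ‖B (X (Y x))‖ := norm_inner_le_norm _ _
        _ ≤ ‖B x‖ * (opnA A X * ‖B (Y x)‖) :=
            mul_le_mul_of_nonneg_left (hXs (Y x)) (norm_nonneg _)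
    rcases eq_or_lt_of_le (norm_nonneg (B (Y x))) with hg | hg
    · rw [← hg]; positivity
    · have h4 : ‖B (Y x)‖ * ‖B (Y x)‖ ≤ (opnA A X * ‖B x‖) * ‖B (Y x)‖ := by
        rw [pow_two] at h3
        calc ‖B (Y x)‖ * ‖B (Y x)‖ ≤ ‖B x‖ * (opnA A X * ‖B (Y x)‖) := h3
          _ = (opnA A X * ‖B x‖) * ‖B (Y x)‖ := by ring
      exact le_of_mul_le_mul_right h4 hg
  have hTsa : ∀ x, ‖B (Ts x)‖ ≤ a * ‖B x‖ := hadj_sharp T Ts hT1 hTa ha0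
  have hSsb : ∀ x, ‖B (Ss x)‖ ≤ b * ‖B x‖ := hadj_sharp S Ss hS1 hSb hb0
  set s := Real.sqrt ((a ^ 2 - b ^ 2) ^ 2 + 4 * c ^ 2) with hs_def
  set lam := (1/2 : ℝ) * (a ^ 2 + b ^ 2 + s) with hlam_def
  have hs0 : 0 ≤ s := Real.sqrt_nonneg _
  have hlam0 : 0 ≤ lam := by rw [hlam_def]; positivity
  -- pointwise bound for unit vectors
  have hpoint : ∀ x : H, ‖B x‖ = 1 → ‖B ((T + S) x)‖ ^ 2 ≤ lam + 2 * w := by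
    intro x hx1
    set p := ‖B (T x)‖ with hp_def
    set q := ‖B (S x)‖ with hq_def
    have hp0 : 0 ≤ p := norm_nonneg _
    have hq0 : 0 ≤ q := norm_nonneg _
    -- cross term
    have ecross : RCLike.re (inner ℂ (B (T x)) (B (S x)) : ℂ) ≤ w := by
      have e1 : (inner ℂ (A ((Ss ∘L T) x)) x : ℂ) = inner ℂ (B (T x)) (B (S x)) := by
        have hAx : A (Ss (T x)) = (adjoint S) (A (T x)) := by
          rw [← star_eq_adjoint]
          exact congrFun (congrArg DFunLike.coe hS1) (T x)
        show (inner ℂ (A (Ss (T x))) x : ℂ) = _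
        rw [hAx, adjoint_inner_left, aux_innerA_eq hB hBA]
      calc RCLike.re (inner ℂ (B (T x)) (B (S x)) : ℂ)
          = RCLike.re (inner ℂ (A ((Ss ∘L T) x)) x : ℂ) := by rw [e1]
        _ ≤ ‖(inner ℂ (A ((Ss ∘L T) x)) x : ℂ)‖ := RCLike.re_le_norm _
        _ ≤ w := by
            rw [hw_def]
            exact aux_le_wA hB hBA hK5 (by rw [hw_eq] at *; exact hb5) hx1
    -- expansion of the sum
    have e_exp : ‖B ((T + S) x)‖ ^ 2 =
        p ^ 2 + 2 * RCLike.re (inner ℂ (B (T x)) (B (S x)) : ℂ) + q ^ 2 := by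
      have : B ((T + S) x) = B (T x) + B (S x) := by
        rw [ContinuousLinearMap.add_apply, map_add]
      rw [this, norm_add_sq (𝕜 := ℂ)]
    -- the p² + q² ≤ lam part
    have hpq : p ^ 2 + q ^ 2 ≤ lam := by
      -- f1 : p² + q² as inner product
      have f1 : p ^ 2 + q ^ 2 = RCLike.re (inner ℂ (B x) (B (Ts (T x) + Ss (S x))) : ℂ) := by
        have g1 : (p:ℝ) ^ 2 = RCLike.re (inner ℂ (B x) (B (Ts (T x))) : ℂ) := by
          have hAx : A (T x) = (adjoint Ts) (A x) := by
            rw [← star_eq_adjoint]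
            exact congrFun (congrArg DFunLike.coe hT2) x
          rw [hp_def, ← inner_self_eq_norm_sq (𝕜 := ℂ), ← aux_innerA_eq hB hBA, hAx,
            adjoint_inner_left, aux_innerA_eq hB hBA]
        have g2 : (q:ℝ) ^ 2 = RCLike.re (inner ℂ (B x) (B (Ss (S x))) : ℂ) := by
          have hAx : A (S x) = (adjoint Ss) (A x) := by
            rw [← star_eq_adjoint]
            exact congrFun (congrArg DFunLike.coe hS2) x
          rw [hq_def, ← inner_self_eq_norm_sq (𝕜 := ℂ), ← aux_innerA_eq hB hBA, hAx,
            adjoint_inner_left, aux_innerA_eq hB hBA]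
        rw [g1, g2, map_add, inner_add_right, map_add]
      have f2 : p ^ 2 + q ^ 2 ≤ ‖B (Ts (T x) + Ss (S x))‖ := by
        calc p ^ 2 + q ^ 2 = RCLike.re (inner ℂ (B x) (B (Ts (T x) + Ss (S x))) : ℂ) := f1
          _ ≤ ‖(inner ℂ (B x) (B (Ts (T x) + Ss (S x))) : ℂ)‖ := RCLike.re_le_norm _
          _ ≤ ‖B x‖ * ‖B (Ts (T x) + Ss (S x))‖ := norm_inner_le_norm _ _
          _ = ‖B (Ts (T x) + Ss (S x))‖ := by rw [hx1, one_mul]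
      have f3 : ‖B (Ts (T x) + Ss (S x))‖ ^ 2 =
          ‖B (Ts (T x))‖ ^ 2 + 2 * RCLike.re (inner ℂ (B (Ts (T x))) (B (Ss (S x))) : ℂ)
            + ‖B (Ss (S x))‖ ^ 2 := by
        rw [map_add, norm_add_sq (𝕜 := ℂ)]
      have f4a : ‖B (Ts (T x))‖ ≤ a * p := hTsa (T x)
      have f4b : ‖B (Ss (S x))‖ ≤ b * q := hSsb (S x)
      have f5 : RCLike.re (inner ℂ (B (Ts (T x))) (B (Ss (S x))) : ℂ) ≤ c * p * q := by
        have e2 : (inner ℂ (B (Ts (T x))) (B (Ss (S x))) : ℂ) =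
            inner ℂ (B (T x)) (B (T (Ss (S x)))) := by
          rw [← aux_innerA_eq hB hBA]
          have hAx : A (Ts (T x)) = (adjoint T) (A (T x)) := by
            rw [← star_eq_adjoint]
            exact congrFun (congrArg DFunLike.coe hT1) (T x)
          rw [hAx, adjoint_inner_left, aux_innerA_eq hB hBA]
        calc RCLike.re (inner ℂ (B (Ts (T x))) (B (Ss (S x))) : ℂ)
            = RCLike.re (inner ℂ (B (T x)) (B (T (Ss (S x)))) : ℂ) := by rw [e2]
          _ ≤ ‖(inner ℂ (B (T x)) (B (T (Ss (S x)))) : ℂ)‖ := RCLike.re_le_norm _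
          _ ≤ ‖B (T x)‖ * ‖B (T (Ss (S x)))‖ := norm_inner_le_norm _ _
          _ ≤ p * (c * q) := mul_le_mul_of_nonneg_left (hTSsc (S x)) hp0
          _ = c * p * q := by ring
      have f6 : (p ^ 2 + q ^ 2) ^ 2 ≤ (a * p) ^ 2 + (b * q) ^ 2 + 2 * (c * p * q) := by
        have h1 : (p ^ 2 + q ^ 2) ^ 2 ≤ ‖B (Ts (T x) + Ss (S x))‖ ^ 2 :=
          pow_le_pow_left₀ (by positivity) f2 2
        have h2 : ‖B (Ts (T x))‖ ^ 2 ≤ (a * p) ^ 2 :=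
          pow_le_pow_left₀ (norm_nonneg _) f4a 2
        have h3 : ‖B (Ss (S x))‖ ^ 2 ≤ (b * q) ^ 2 :=
          pow_le_pow_left₀ (norm_nonneg _) f4b 2
        rw [f3] at h1
        linarith [h1, h2, h3, f5]
      have f7 := aux_scalar ha0 hb0 hc0 hp0 hq0
      -- (p²+q²)² ≤ lam (p²+q²) ⇒ p²+q² ≤ lam
      have f8 : (p ^ 2 + q ^ 2) ^ 2 ≤ lam * (p ^ 2 + q ^ 2) := by
        calc (p ^ 2 + q ^ 2) ^ 2 ≤ (a * p) ^ 2 + (b * q) ^ 2 + 2 * (c * p * q) := f6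
          _ ≤ lam * (p ^ 2 + q ^ 2) := by rw [hlam_def, hs_def]; exact f7
      rcases eq_or_lt_of_le (by positivity : (0:ℝ) ≤ p ^ 2 + q ^ 2) with h0 | h0
      · rw [← h0]; exact hlam0
      · have hf8 : (p ^ 2 + q ^ 2) * (p ^ 2 + q ^ 2) ≤ lam * (p ^ 2 + q ^ 2) := by
          rw [← pow_two]; exact f8
        exact le_of_mul_le_mul_right hf8 h0
    rw [e_exp]
    linarith [ecross, hpq]
  -- first inequality
  have first : opnA A (T + S) ≤ Real.sqrt (lam + 2 * w) := by
    apply aux_opnA_le hB hBA hK3 hb3 hA0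
    intro x hx1
    have := hpoint x hx1
    have h0 : 0 ≤ lam + 2 * w := by positivity
    rw [show ‖B ((T + S) x)‖ = Real.sqrt (‖B ((T + S) x)‖ ^ 2) by
      rw [Real.sqrt_sq (norm_nonneg _)]]
    exact Real.sqrt_le_sqrt this
  -- second inequality pieces
  have hc_ab : c ≤ a * b := by
    rw [hc_def, hc_eq]
    apply aux_opnA_le hB hBA hK4 hb4 hA0
    intro x hx1
    calc ‖B ((T * Ss) x)‖ = ‖B (T (Ss x))‖ := rfl
      _ ≤ a * ‖B (Ss x)‖ := hTa (Ss x)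
      _ ≤ a * (b * ‖B x‖) := mul_le_mul_of_nonneg_left (hSsb x) ha0
      _ = a * b := by rw [hx1, mul_one]
  have hw_ab : w ≤ a * b := by
    rw [hw_def, hw_eq]
    apply aux_wA_le hB hBA hK5 hb5 hA0
    intro x hx1
    calc ‖(inner ℂ (A ((Ss * T) x)) x : ℂ)‖ = ‖(inner ℂ (B (Ss (T x))) (B x) : ℂ)‖ := by
          rw [aux_innerA_eq hB hBA]; rfl
      _ ≤ ‖B (Ss (T x))‖ * ‖B x‖ := norm_inner_le_norm _ _
      _ ≤ (b * ‖B (T x)‖) * ‖B x‖ := mul_le_mul_of_nonneg_right (hSsb (T x)) (norm_nonneg _)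
      _ ≤ (b * (a * ‖B x‖)) * ‖B x‖ := by
          have := hTa x
          gcongr
      _ = a * b := by rw [hx1]; ring
  have hs_ab : s ≤ a ^ 2 + b ^ 2 := by
    rw [hs_def]
    calc Real.sqrt ((a ^ 2 - b ^ 2) ^ 2 + 4 * c ^ 2)
        ≤ Real.sqrt ((a ^ 2 + b ^ 2) ^ 2) := by
          apply Real.sqrt_le_sqrt
          nlinarith [hc_ab, hc0, ha0, hb0]
      _ = a ^ 2 + b ^ 2 := Real.sqrt_sq (by positivity)
  have second : Real.sqrt (lam + 2 * w) ≤ a + b := by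
    calc Real.sqrt (lam + 2 * w) ≤ Real.sqrt ((a + b) ^ 2) := by
          apply Real.sqrt_le_sqrt
          rw [hlam_def]
          nlinarith [hs_ab, hw_ab]
      _ = a + b := Real.sqrt_sq (by positivity)
  exact ⟨by rw [hlam_def, hs_def] at first; exact first,
    by rw [hlam_def, hs_def] at second; exact second⟩
end

section
/- Let T and S be bounded linear operators on H admitting reduced A-adjoints T^♯ and S^♯. Then ‖T + S‖_A² ≤ ‖T^♯T + S^♯S‖_A + 2ω_A(S^♯T). -/
open ContinuousLinearMap

variable {H : Type*} [NormedAddCommGroup H] [InnerProductSpace ℂ H] [CompleteSpace H]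

lemma sa_inner (A : H →L[ℂ] H) (hA : A.IsPositive) (x y : H) :
    (inner ℂ (A x) y : ℂ) = inner ℂ x (A y) := by
  conv_lhs => rw [← isSelfAdjoint_iff'.mp hA.isSelfAdjoint]
  rw [ContinuousLinearMap.adjoint_inner_left]

lemma csA (A : H →L[ℂ] H) (hA : A.IsPositive) (x y : H) :
    ‖(inner ℂ (A x) y : ℂ)‖ ^ 2 ≤
      RCLike.re (inner ℂ (A x) x : ℂ) * RCLike.re (inner ℂ (A y) y : ℂ) := by
  letI c : PreInnerProductSpace.Core ℂ H :=
    { inner := fun u v => (inner ℂ (A u) v : ℂ)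
      conj_inner_symm := fun u v => by
        simpa [sa_inner A hA] using (inner_conj_symm u (A v) : _)
      re_inner_nonneg := fun u => hA.re_inner_nonneg_left u
      add_left := fun u v w => by simp [inner_add_left]
      smul_left := fun u v r => by simp [inner_smul_left, mul_comm] }
  have h := InnerProductSpace.Core.inner_mul_inner_self_le (𝕜 := ℂ) (F := H) x y
  have hsymm : ‖(inner ℂ (A y) x : ℂ)‖ = ‖(inner ℂ (A x) y : ℂ)‖ := by
    calc ‖(inner ℂ (A y) x : ℂ)‖ = ‖(starRingEnd ℂ) (inner ℂ (A y) x : ℂ)‖ := (RCLike.norm_conj _).symm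
      _ = ‖(inner ℂ x (A y) : ℂ)‖ := by rw [inner_conj_symm]
      _ = ‖(inner ℂ (A x) y : ℂ)‖ := by rw [← sa_inner A hA]
  calc ‖(inner ℂ (A x) y : ℂ)‖ ^ 2
      = ‖(inner ℂ (A x) y : ℂ)‖ * ‖(inner ℂ (A y) x : ℂ)‖ := by rw [hsymm, sq]
    _ ≤ _ := h

lemma keyA (A : H →L[ℂ] H) (hA : A.IsPositive) (R : H →L[ℂ] H)
    (hR : A ∘L R = (ContinuousLinearMap.adjoint R) ∘L A) (x : H) :
    ‖(inner ℂ (A (R x)) x : ℂ)‖ ≤ ‖R‖ * RCLike.re (inner ℂ (A x) x : ℂ) := by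
  set r := RCLike.re (inner ℂ (A x) x : ℂ) with hrdef
  have hr0 : 0 ≤ r := hA.re_inner_nonneg_left x
  have hRpt : ∀ y : H, A (R y) = (ContinuousLinearMap.adjoint R) (A y) := by
    intro y
    have := congrFun (congrArg (fun (f : H →L[ℂ] H) => (f : H → H)) hR) y
    simpa using this
  have hpow : ∀ (m : ℕ) (y : H), A ((R ^ m) y) = ((ContinuousLinearMap.adjoint R) ^ m) (A y) := by
    intro m
    induction m with
    | zero => intro y; simp
    | succ n ih =>
      intro y
      have h1 : (R ^ (n + 1)) y = (R ^ n) (R y) := by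
        rw [pow_succ]; rfl
      have h2 : ((ContinuousLinearMap.adjoint R) ^ (n + 1)) (A y)
          = ((ContinuousLinearMap.adjoint R) ^ n) ((ContinuousLinearMap.adjoint R) (A y)) := by
        rw [pow_succ]; rfl
      rw [h1, h2, ih (R y), hRpt y]
  have fact : ∀ m : ℕ, (inner ℂ (A ((R ^ (2 * m)) x)) x : ℂ)
      = inner ℂ (A ((R ^ m) x)) ((R ^ m) x) := by
    intro m
    have h1 : (R ^ (2 * m)) x = (R ^ m) ((R ^ m) x) := by
      rw [two_mul, pow_add]; rfl
    rw [h1, hpow m ((R ^ m) x)]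
    have h2 : ((ContinuousLinearMap.adjoint R) ^ m) = ContinuousLinearMap.adjoint (R ^ m) := by
      rw [← star_eq_adjoint, ← star_eq_adjoint, ← star_pow]
    rw [h2, ContinuousLinearMap.adjoint_inner_left]
  -- nonnegativity of even terms
  have keven : ∀ m : ℕ, 0 ≤ RCLike.re (inner ℂ (A ((R ^ (2 * m)) x)) x : ℂ) := by
    intro m; rw [fact m]; exact hA.re_inner_nonneg_left _
  -- Cauchy-Schwarz step
  have cs2 : ∀ m : ℕ, ‖(inner ℂ (A ((R ^ m) x)) x : ℂ)‖ ^ 2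
      ≤ RCLike.re (inner ℂ (A ((R ^ (2 * m)) x)) x : ℂ) * r := by
    intro m; rw [fact m]
    exact csA A hA ((R ^ m) x) x
  -- trivial cases
  rcases eq_or_lt_of_le hr0 with hr | hr
  · -- r = 0
    have h := cs2 1
    rw [← hr, mul_zero] at h
    have h1 : ‖(inner ℂ (A ((R ^ 1) x)) x : ℂ)‖ = 0 :=
      le_antisymm (by nlinarith [norm_nonneg (inner ℂ (A ((R ^ 1) x)) x : ℂ)]) (norm_nonneg _)
    rw [pow_one] at h1
    rw [h1, ← hr, mul_zero]
  rcases eq_or_lt_of_le (norm_nonneg R) with hRn | hRn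
  · -- ‖R‖ = 0, so R = 0
    have : R = 0 := by rwa [eq_comm, norm_eq_zero] at hRn
    simp [this, ← hrdef]
  -- main claim by induction
  have claim : ∀ n : ℕ, ‖(inner ℂ (A (R x)) x : ℂ)‖ ^ (2 ^ (n + 1)) * r
      ≤ RCLike.re (inner ℂ (A ((R ^ (2 ^ (n + 1))) x)) x : ℂ) * r ^ (2 ^ (n + 1)) := by
    intro n
    induction n with
    | zero =>
      have h := cs2 1
      rw [pow_one] at h
      calc ‖(inner ℂ (A (R x)) x : ℂ)‖ ^ (2 ^ 1) * r
          ≤ (RCLike.re (inner ℂ (A ((R ^ 2) x)) x : ℂ) * r) * r := by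
            have : (2 : ℕ) * 1 = 2 := by norm_num
            rw [this] at h
            exact mul_le_mul_of_nonneg_right h hr0
        _ = RCLike.re (inner ℂ (A ((R ^ (2 ^ 1)) x)) x : ℂ) * r ^ (2 ^ 1) := by ring_nf
    | succ n ih =>
      have hb : 0 ≤ RCLike.re (inner ℂ (A ((R ^ (2 ^ (n + 1))) x)) x : ℂ) := by
        have := keven (2 ^ n)
        rwa [show 2 * 2 ^ n = 2 ^ (n + 1) by rw [pow_succ]; ring] at this
      have hsq := mul_le_mul ih ih (by positivity) (by positivity)
      -- hsq : (a^(2^(n+1)) * r)^2-ish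
      have hcs := cs2 (2 ^ (n + 1))
      rw [show 2 * 2 ^ (n + 1) = 2 ^ (n + 2) by rw [pow_succ (2:ℕ) (n+1)]; ring] at hcs
      have hre : RCLike.re (inner ℂ (A ((R ^ (2 ^ (n + 1))) x)) x : ℂ) ^ 2
          ≤ RCLike.re (inner ℂ (A ((R ^ (2 ^ (n + 2))) x)) x : ℂ) * r := by
        calc RCLike.re (inner ℂ (A ((R ^ (2 ^ (n + 1))) x)) x : ℂ) ^ 2
            ≤ ‖(inner ℂ (A ((R ^ (2 ^ (n + 1))) x)) x : ℂ)‖ ^ 2 := by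
              have := RCLike.abs_re_le_norm (inner ℂ (A ((R ^ (2 ^ (n + 1))) x)) x : ℂ)
              nlinarith [abs_nonneg (RCLike.re (inner ℂ (A ((R ^ (2 ^ (n + 1))) x)) x : ℂ)), sq_abs (RCLike.re (inner ℂ (A ((R ^ (2 ^ (n + 1))) x)) x : ℂ))]
          _ ≤ _ := hcs
      -- combine
      set a := ‖(inner ℂ (A (R x)) x : ℂ)‖ with ha
      set b := RCLike.re (inner ℂ (A ((R ^ (2 ^ (n + 1))) x)) x : ℂ)
      set c := RCLike.re (inner ℂ (A ((R ^ (2 ^ (n + 2))) x)) x : ℂ)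
      have ha0 : 0 ≤ a := norm_nonneg _
      have key2 : a ^ (2 ^ (n + 2)) * (r * r) ≤ (c * r) * (r ^ (2 ^ (n + 1)) * r ^ (2 ^ (n + 1))) := by
        calc a ^ (2 ^ (n + 2)) * (r * r)
            = (a ^ (2 ^ (n + 1)) * r) * (a ^ (2 ^ (n + 1)) * r) := by
              rw [show (2:ℕ) ^ (n + 2) = 2 ^ (n + 1) + 2 ^ (n + 1) by rw [pow_succ]; ring, pow_add]
              ring
          _ ≤ (b * r ^ (2 ^ (n + 1))) * (b * r ^ (2 ^ (n + 1))) := hsq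
          _ = b ^ 2 * (r ^ (2 ^ (n + 1)) * r ^ (2 ^ (n + 1))) := by ring
          _ ≤ (c * r) * (r ^ (2 ^ (n + 1)) * r ^ (2 ^ (n + 1))) :=
              mul_le_mul_of_nonneg_right hre (by positivity)
      have : a ^ (2 ^ (n + 2)) * r * r ≤ c * r ^ (2 ^ (n + 2)) * r := by
        calc a ^ (2 ^ (n + 2)) * r * r = a ^ (2 ^ (n + 2)) * (r * r) := by ring
          _ ≤ (c * r) * (r ^ (2 ^ (n + 1)) * r ^ (2 ^ (n + 1))) := key2
          _ = c * r ^ (2 ^ (n + 2)) * r := by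
              rw [show (2:ℕ) ^ (n + 2) = 2 ^ (n + 1) + 2 ^ (n + 1) by rw [pow_succ]; ring, pow_add]
              ring
      exact le_of_mul_le_mul_right this hr
  -- conclude by contradiction
  by_contra hcon
  push_neg at hcon
  set a := ‖(inner ℂ (A (R x)) x : ℂ)‖ with ha
  have ha0 : 0 ≤ a := norm_nonneg _
  have hB : 0 < ‖R‖ * r := mul_pos hRn hr
  have hq1 : 1 < a / (‖R‖ * r) := (one_lt_div hB).mpr hcon
  obtain ⟨n, hn⟩ := pow_unbounded_of_one_lt ((‖A‖ * ‖x‖ ^ 2) / r) hq1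
  have hbound : ∀ m : ℕ, 0 < m → RCLike.re (inner ℂ (A ((R ^ m) x)) x : ℂ) ≤ ‖A‖ * ‖R‖ ^ m * ‖x‖ ^ 2 := by
    intro m hm
    calc RCLike.re (inner ℂ (A ((R ^ m) x)) x : ℂ)
        ≤ ‖(inner ℂ (A ((R ^ m) x)) x : ℂ)‖ := RCLike.re_le_norm _
      _ ≤ ‖A ((R ^ m) x)‖ * ‖x‖ := norm_inner_le_norm _ _
      _ ≤ (‖A‖ * (‖R‖ ^ m * ‖x‖)) * ‖x‖ := by
          apply mul_le_mul_of_nonneg_right _ (norm_nonneg x)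
          calc ‖A ((R ^ m) x)‖ ≤ ‖A‖ * ‖(R ^ m) x‖ := A.le_opNorm _
            _ ≤ ‖A‖ * (‖R ^ m‖ * ‖x‖) := by
                apply mul_le_mul_of_nonneg_left ((R ^ m).le_opNorm x) (norm_nonneg A)
            _ ≤ ‖A‖ * (‖R‖ ^ m * ‖x‖) := by
                apply mul_le_mul_of_nonneg_left _ (norm_nonneg A)
                exact mul_le_mul_of_nonneg_right (norm_pow_le' R hm) (norm_nonneg x)
      _ = ‖A‖ * ‖R‖ ^ m * ‖x‖ ^ 2 := by ring
  have hup : (a / (‖R‖ * r)) ^ (2 ^ (n + 1)) ≤ (‖A‖ * ‖x‖ ^ 2) / r := by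
    rw [div_pow, div_le_div_iff₀ (by positivity) hr]
    calc a ^ (2 ^ (n + 1)) * r
        ≤ RCLike.re (inner ℂ (A ((R ^ (2 ^ (n + 1))) x)) x : ℂ) * r ^ (2 ^ (n + 1)) := claim n
      _ ≤ (‖A‖ * ‖R‖ ^ (2 ^ (n + 1)) * ‖x‖ ^ 2) * r ^ (2 ^ (n + 1)) := by
          apply mul_le_mul_of_nonneg_right (hbound _ (by positivity)) (by positivity)
      _ = ‖A‖ * ‖x‖ ^ 2 * (‖R‖ * r) ^ (2 ^ (n + 1)) := by rw [mul_pow]; ring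
  have hmono : (a / (‖R‖ * r)) ^ n ≤ (a / (‖R‖ * r)) ^ (2 ^ (n + 1)) := by
    apply pow_le_pow_right₀ hq1.le
    calc n ≤ 2 ^ n := (Nat.lt_two_pow_self (n := n)).le
      _ ≤ 2 ^ (n + 1) := Nat.pow_le_pow_right (by norm_num) (Nat.le_succ n)
  exact absurd (hn.trans_le (hmono.trans hup)) (lt_irrefl _)

lemma flip_adj (A T Ts : H →L[ℂ] H) (hA : A.IsPositive)
    (hT : A ∘L Ts = (ContinuousLinearMap.adjoint T) ∘L A) :
    A ∘L T = (ContinuousLinearMap.adjoint Ts) ∘L A := by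
  have h := congrArg ContinuousLinearMap.adjoint hT
  rw [adjoint_comp, adjoint_comp, adjoint_adjoint, isSelfAdjoint_iff'.mp hA.isSelfAdjoint] at h
  exact h.symm

lemma inner_Ts (A T Ts : H →L[ℂ] H)
    (hT : A ∘L Ts = (ContinuousLinearMap.adjoint T) ∘L A) (z y : H) :
    (inner ℂ (A (Ts z)) y : ℂ) = inner ℂ (A z) (T y) := by
  have h : A (Ts z) = (ContinuousLinearMap.adjoint T) (A z) := by
    have := congrFun (congrArg (fun (f : H →L[ℂ] H) => (f : H → H)) hT) z
    simpa using this
  rw [h, ContinuousLinearMap.adjoint_inner_left]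

lemma compsa (A T Ts : H →L[ℂ] H) (hA : A.IsPositive)
    (hT : A ∘L Ts = (ContinuousLinearMap.adjoint T) ∘L A) :
    A ∘L (Ts ∘L T) = (ContinuousLinearMap.adjoint (Ts ∘L T)) ∘L A := by
  rw [adjoint_comp]
  calc A ∘L (Ts ∘L T) = (A ∘L Ts) ∘L T := by rw [ContinuousLinearMap.comp_assoc]
    _ = ((ContinuousLinearMap.adjoint T) ∘L A) ∘L T := by rw [hT]
    _ = (ContinuousLinearMap.adjoint T) ∘L (A ∘L T) := by rw [ContinuousLinearMap.comp_assoc]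
    _ = (ContinuousLinearMap.adjoint T) ∘L ((ContinuousLinearMap.adjoint Ts) ∘L A) := by
        rw [flip_adj A T Ts hA hT]
    _ = ((ContinuousLinearMap.adjoint T) ∘L (ContinuousLinearMap.adjoint Ts)) ∘L A := by
        rw [ContinuousLinearMap.comp_assoc]

lemma boundT (A T Ts : H →L[ℂ] H) (hA : A.IsPositive)
    (hT : A ∘L Ts = (ContinuousLinearMap.adjoint T) ∘L A) (x : H)
    (hx : RCLike.re (inner ℂ (A x) x : ℂ) = 1) :
    RCLike.re (inner ℂ (A (T x)) (T x) : ℂ) ≤ ‖Ts ∘L T‖ := by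
  have h1 : (inner ℂ (A ((Ts ∘L T) x)) x : ℂ) = inner ℂ (A (T x)) (T x) := inner_Ts A T Ts hT (T x) x
  have h2 := keyA A hA (Ts ∘L T) (compsa A T Ts hA hT) x
  rw [hx, mul_one, h1] at h2
  exact (RCLike.re_le_norm _).trans h2

theorem stmt14 (A T S Ts Ss : H →L[ℂ] H) (hA : A.IsPositive) (hA0 : A ≠ 0)
    (hTs : IsReducedAdjA A T Ts) (hSs : IsReducedAdjA A S Ss) :
    (opnA A (T + S))^2 ≤ opnA A (Ts ∘L T + Ss ∘L S) + 2 * wA A (Ss ∘L T) := by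
  set R := Ts ∘L T + Ss ∘L S with hRdef
  set W := Ss ∘L T with hWdef
  have hT := hTs.1
  have hS := hSs.1
  -- sphere facts
  have hsph : ∀ x : H, vnA A x = 1 → RCLike.re (inner ℂ (A x) x : ℂ) = 1 := fun x hx =>
    Real.sqrt_eq_one.mp hx
  have hvnsq : ∀ y : H, (vnA A y) ^ 2 = RCLike.re (inner ℂ (A y) y : ℂ) := fun y =>
    Real.sq_sqrt (hA.re_inner_nonneg_left y)
  -- R is A-selfadjoint
  have hRsa : A ∘L R = (ContinuousLinearMap.adjoint R) ∘L A := by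
    rw [hRdef, ContinuousLinearMap.comp_add, map_add, ContinuousLinearMap.add_comp,
      compsa A T Ts hA hT, compsa A S Ss hA hS]
  -- bound for vnA (T y) on the sphere
  have hbT : ∀ (T' Ts' : H →L[ℂ] H), A ∘L Ts' = (ContinuousLinearMap.adjoint T') ∘L A →
      ∀ y : H, vnA A y = 1 → vnA A (T' y) ≤ Real.sqrt ‖Ts' ∘L T'‖ := by
    intro T' Ts' hT' y hy
    have := boundT A T' Ts' hA hT' y (hsph y hy)
    exact Real.sqrt_le_sqrt this
  -- BddAbove for opnA A R
  have bddR : BddAbove ((fun x => vnA A (R x)) '' {x : H | vnA A x = 1}) := by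
    refine ⟨Real.sqrt ‖R ∘L R‖, ?_⟩
    rintro v ⟨y, hy, rfl⟩
    exact hbT R R hRsa y hy
  -- BddAbove for wA A W
  have bddW : BddAbove ((fun x => ‖(inner ℂ (A (W x)) x : ℂ)‖) '' {x : H | vnA A x = 1}) := by
    refine ⟨Real.sqrt ‖Ts ∘L T‖ * Real.sqrt ‖Ss ∘L S‖, ?_⟩
    rintro v ⟨y, hy, rfl⟩
    simp only
    have e1 : (inner ℂ (A (W y)) y : ℂ) = inner ℂ (A (T y)) (S y) := inner_Ts A S Ss hS (T y) y
    rw [e1]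
    have hcs := csA A hA (T y) (S y)
    have h1 := boundT A T Ts hA hT y (hsph y hy)
    have h2 := boundT A S Ss hA hS y (hsph y hy)
    have hnn : (0:ℝ) ≤ ‖(inner ℂ (A (T y)) (S y) : ℂ)‖ := norm_nonneg _
    have key : ‖(inner ℂ (A (T y)) (S y) : ℂ)‖ ^ 2 ≤ ‖Ts ∘L T‖ * ‖Ss ∘L S‖ := by
      calc ‖(inner ℂ (A (T y)) (S y) : ℂ)‖ ^ 2
          ≤ RCLike.re (inner ℂ (A (T y)) (T y) : ℂ) * RCLike.re (inner ℂ (A (S y)) (S y) : ℂ) := hcs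
        _ ≤ ‖Ts ∘L T‖ * ‖Ss ∘L S‖ := by
            have := hA.re_inner_nonneg_left (T y)
            have := hA.re_inner_nonneg_left (S y)
            have h1n : (0:ℝ) ≤ ‖Ts ∘L T‖ := norm_nonneg _
            nlinarith [hA.re_inner_nonneg_left (T y), hA.re_inner_nonneg_left (S y)]
    calc ‖(inner ℂ (A (T y)) (S y) : ℂ)‖ = Real.sqrt (‖(inner ℂ (A (T y)) (S y) : ℂ)‖ ^ 2) :=
          (Real.sqrt_sq hnn).symm
      _ ≤ Real.sqrt (‖Ts ∘L T‖ * ‖Ss ∘L S‖) := Real.sqrt_le_sqrt key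
      _ = Real.sqrt ‖Ts ∘L T‖ * Real.sqrt ‖Ss ∘L S‖ := Real.sqrt_mul (norm_nonneg _) _
  -- nonnegativity of RHS pieces
  have hopnR0 : 0 ≤ opnA A R := Real.sSup_nonneg (by rintro v ⟨y, _, rfl⟩; exact Real.sqrt_nonneg _)
  have hwW0 : 0 ≤ wA A W := Real.sSup_nonneg (by rintro v ⟨y, _, rfl⟩; exact norm_nonneg _)
  set c := opnA A R + 2 * wA A W with hcdef
  have hc0 : 0 ≤ c := by positivity
  -- pointwise bound
  have hpt : ∀ x : H, vnA A x = 1 → vnA A ((T + S) x) ≤ Real.sqrt c := by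
    intro x hx
    have hx1 := hsph x hx
    -- expansion
    have e1 : (inner ℂ (A ((Ts ∘L T) x)) x : ℂ) = inner ℂ (A (T x)) (T x) := inner_Ts A T Ts hT (T x) x
    have e2 : (inner ℂ (A ((Ss ∘L S) x)) x : ℂ) = inner ℂ (A (S x)) (S x) := inner_Ts A S Ss hS (S x) x
    have eW : (inner ℂ (A (W x)) x : ℂ) = inner ℂ (A (T x)) (S x) := inner_Ts A S Ss hS (T x) x
    have eR : (inner ℂ (A (R x)) x : ℂ) = inner ℂ (A (T x)) (T x) + inner ℂ (A (S x)) (S x) := by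
      have : R x = (Ts ∘L T) x + (Ss ∘L S) x := rfl
      rw [this, map_add, inner_add_left, e1, e2]
    have esym : RCLike.re (inner ℂ (A (S x)) (T x) : ℂ) = RCLike.re (inner ℂ (A (T x)) (S x) : ℂ) := by
      rw [sa_inner A hA (S x) (T x), inner_re_symm]
    have expand : RCLike.re (inner ℂ (A ((T + S) x)) ((T + S) x) : ℂ)
        = RCLike.re (inner ℂ (A (R x)) x : ℂ) + 2 * RCLike.re (inner ℂ (A (W x)) x : ℂ) := by
      have eTS : (T + S) x = T x + S x := rfl
      rw [eTS, map_add, inner_add_left, inner_add_right, inner_add_right, eR, eW]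
      simp only [map_add]
      rw [esym]
      ring
    -- term 1
    have term1 : RCLike.re (inner ℂ (A (R x)) x : ℂ) ≤ opnA A R := by
      have hcs := csA A hA (R x) x
      rw [hx1, mul_one] at hcs
      have hle : ‖(inner ℂ (A (R x)) x : ℂ)‖ ≤ vnA A (R x) := by
        calc ‖(inner ℂ (A (R x)) x : ℂ)‖ = Real.sqrt (‖(inner ℂ (A (R x)) x : ℂ)‖ ^ 2) :=
              (Real.sqrt_sq (norm_nonneg _)).symm
          _ ≤ Real.sqrt (RCLike.re (inner ℂ (A (R x)) (R x) : ℂ)) := Real.sqrt_le_sqrt hcs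
          _ = vnA A (R x) := rfl
      have hmem : vnA A (R x) ∈ (fun x => vnA A (R x)) '' {x : H | vnA A x = 1} :=
        ⟨x, hx, rfl⟩
      exact (RCLike.re_le_norm _).trans (hle.trans (le_csSup bddR hmem))
    -- term 2
    have term2 : RCLike.re (inner ℂ (A (W x)) x : ℂ) ≤ wA A W := by
      have hmem : ‖(inner ℂ (A (W x)) x : ℂ)‖ ∈
          (fun x => ‖(inner ℂ (A (W x)) x : ℂ)‖) '' {x : H | vnA A x = 1} := ⟨x, hx, rfl⟩
      exact (RCLike.re_le_norm _).trans (le_csSup bddW hmem)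
    -- combine
    have hfin : RCLike.re (inner ℂ (A ((T + S) x)) ((T + S) x) : ℂ) ≤ c := by
      rw [expand, hcdef]; linarith
    calc vnA A ((T + S) x) = Real.sqrt (RCLike.re (inner ℂ (A ((T + S) x)) ((T + S) x) : ℂ)) := rfl
      _ ≤ Real.sqrt c := Real.sqrt_le_sqrt hfin
  -- conclude
  have hsup : opnA A (T + S) ≤ Real.sqrt c := by
    apply Real.sSup_le _ (Real.sqrt_nonneg c)
    rintro v ⟨y, hy, rfl⟩
    exact hpt y hy
  have hsup0 : 0 ≤ opnA A (T + S) :=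
    Real.sSup_nonneg (by rintro v ⟨y, _, rfl⟩; exact Real.sqrt_nonneg _)
  calc (opnA A (T + S)) ^ 2 ≤ (Real.sqrt c) ^ 2 := pow_le_pow_left₀ hsup0 hsup 2
    _ = c := Real.sq_sqrt hc0
end
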